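/- arXiv:1103.2106 — 7 statements merged into one kernel-verified Lean document; each statement's English description precedes it below -/
import Mathlib

section
/- Suppose β, r > 0, y ≥ 0, and g is a function on the primes with |g(p)| ≤ 1 for all primes p; set G(s) := ∏_{p ≤ y prime} (1 − g(p)p^{−s})^{−1}. Let F be any function integrable on the vertical segment [β, β+ir]. Then |∫_β^{β+ir} G(s)F(s) ds| ≤ M·( |G(β)| + √( ∫_β^{β+ir} |(G'/G)(s)|² d|s| · ∫_β^{β+ir} |G(s)|² d|s| ) ), where M := sup_{0 ≤ t ≤ r} |∫_{β+it}^{β+ir} F(s) ds|. -/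
open Complex MeasureTheory Set

/-- The primes `p ≤ y`. -/
noncomputable def primesUpTo (y : ℝ) : Finset ℕ := (Finset.Iic ⌊y⌋₊).filter Nat.Prime

section Aux

variable {y : ℝ} {g : ℕ → ℂ}

lemma primesUpTo_prime {p : ℕ} (hp : p ∈ primesUpTo y) : p.Prime :=
  (Finset.mem_filter.mp hp).2

lemma factor_norm_lt (hg : ∀ p : ℕ, p.Prime → ‖g p‖ ≤ 1) {p : ℕ} (hp : p ∈ primesUpTo y)
    {s : ℂ} (hs : 0 < s.re) : ‖g p * (p : ℂ) ^ (-s)‖ < 1 := by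
  have hp' := primesUpTo_prime hp
  have h1 : (1 : ℝ) < (p : ℝ) := by exact_mod_cast hp'.one_lt
  have hppos : (0 : ℝ) < (p : ℝ) := one_pos.trans h1
  have hnorm : ‖(p : ℂ) ^ (-s)‖ = (p : ℝ) ^ (-s).re := by
    rw [show ((p : ℕ) : ℂ) = ((p : ℝ) : ℂ) by norm_cast]
    rw [Complex.norm_cpow_eq_rpow_re_of_pos hppos]
  have hlt : (p : ℝ) ^ (-s).re < 1 :=
    Real.rpow_lt_one_of_one_lt_of_neg h1 (by simpa using hs)
  calc ‖g p * (p : ℂ) ^ (-s)‖ = ‖g p‖ * ‖(p : ℂ) ^ (-s)‖ := norm_mul _ _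
    _ ≤ 1 * ((p : ℝ) ^ (-s).re) :=
        mul_le_mul (hg p hp') (le_of_eq hnorm) (norm_nonneg _) zero_le_one
    _ < 1 := by simpa using hlt

lemma factor_ne (hg : ∀ p : ℕ, p.Prime → ‖g p‖ ≤ 1) {p : ℕ} (hp : p ∈ primesUpTo y)
    {s : ℂ} (hs : 0 < s.re) : (1 : ℂ) - g p * (p : ℂ) ^ (-s) ≠ 0 := by
  intro h
  have h2 := factor_norm_lt hg hp hs (y := y)
  rw [sub_eq_zero] at h
  rw [← h] at h2
  simp at h2

lemma G_diffAt (hg : ∀ p : ℕ, p.Prime → ‖g p‖ ≤ 1) {s : ℂ} (hs : 0 < s.re) :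
    DifferentiableAt ℂ (fun s => ∏ p ∈ primesUpTo y, (1 - g p * (p : ℂ) ^ (-s))⁻¹) s := by
  apply DifferentiableAt.fun_finsetProd
  intro p hp
  have hp' := primesUpTo_prime hp
  have hpne : ((p : ℂ)) ≠ 0 := by exact_mod_cast hp'.ne_zero
  exact ((differentiableAt_const _).sub ((differentiableAt_const _).mul
    (differentiableAt_id.neg.const_cpow (Or.inl hpne)))).inv (factor_ne hg hp hs)

lemma deriv_G_contOn (hg : ∀ p : ℕ, p.Prime → ‖g p‖ ≤ 1) :
    ContinuousOn (deriv (fun s => ∏ p ∈ primesUpTo y, (1 - g p * (p : ℂ) ^ (-s))⁻¹))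
      {s : ℂ | 0 < s.re} := by
  have hU : IsOpen {s : ℂ | 0 < s.re} := isOpen_lt continuous_const Complex.continuous_re
  have hdiff : DifferentiableOn ℂ
      (fun s => ∏ p ∈ primesUpTo y, (1 - g p * (p : ℂ) ^ (-s))⁻¹) {s : ℂ | 0 < s.re} :=
    fun s hs => (G_diffAt hg hs).differentiableWithinAt
  exact ((hdiff.analyticOnNhd hU).deriv).continuousOn

end Aux

/-- Lemma 1: a Fubini/Cauchy–Schwarz bound for integrals of an Euler product
`G(s) = ∏_{p ≤ y} (1 - g(p)p^{-s})⁻¹` against an integrable function `F` along the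
vertical segment `[β, β + ir]`. -/
theorem euler_product_integral_bound
    (β r y : ℝ) (hβ : 0 < β) (hr : 0 < r) (hy : 0 ≤ y)
    (g : ℕ → ℂ) (hg : ∀ p : ℕ, p.Prime → ‖g p‖ ≤ 1)
    (G : ℂ → ℂ)
    (hG : G = fun s => ∏ p ∈ primesUpTo y, (1 - g p * (p : ℂ) ^ (-s))⁻¹)
    (F : ℂ → ℂ)
    (hF : IntervalIntegrable (fun τ : ℝ => F ((β : ℂ) + (τ : ℂ) * Complex.I)) volume 0 r)
    (M : ℝ)
    (hM : M = ⨆ t : Set.Icc (0 : ℝ) r,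
      ‖∫ τ in (t : ℝ)..r, F ((β : ℂ) + (τ : ℂ) * Complex.I)‖) :
    ‖∫ τ in (0 : ℝ)..r,
        G ((β : ℂ) + (τ : ℂ) * Complex.I) * F ((β : ℂ) + (τ : ℂ) * Complex.I)‖ ≤
      M * (‖G (β : ℂ)‖ +
        Real.sqrt
          ((∫ τ in (0 : ℝ)..r,
              ‖deriv G ((β : ℂ) + (τ : ℂ) * Complex.I) /
                G ((β : ℂ) + (τ : ℂ) * Complex.I)‖ ^ 2) *
            (∫ τ in (0 : ℝ)..r, ‖G ((β : ℂ) + (τ : ℂ) * Complex.I)‖ ^ 2))) := by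
  -- notation
  set Ft : ℝ → ℂ := fun τ => F ((β : ℂ) + (τ : ℂ) * I) with hFt
  set Φ : ℝ → ℂ := fun t => ∫ τ in t..r, Ft τ with hΦ
  have hre : ∀ τ : ℝ, 0 < ((β : ℂ) + (τ : ℂ) * I).re := fun τ => by simp [hβ]
  have hβre : (0:ℝ) < ((β : ℂ) : ℂ).re := by simpa using hβ
  -- basic facts about G
  have hGd : ∀ s : ℂ, 0 < s.re → DifferentiableAt ℂ G s := by
    rw [hG]; exact fun s hs => G_diffAt hg hs
  have hGne : ∀ s : ℂ, 0 < s.re → G s ≠ 0 := by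
    rw [hG]
    intro s hs
    exact Finset.prod_ne_zero_iff.mpr fun p hp => inv_ne_zero (factor_ne hg hp hs)
  have hdercont : ContinuousOn (deriv G) {s : ℂ | 0 < s.re} := by
    rw [hG]; exact deriv_G_contOn hg
  have hφcont : Continuous (fun τ : ℝ => (β : ℂ) + (τ : ℂ) * I) := by fun_prop
  have hφ : ∀ τ : ℝ, HasDerivAt (fun t : ℝ => (β : ℂ) + (t : ℂ) * I) I τ := by
    intro τ
    have h1 : HasDerivAt (fun t : ℝ => ((t : ℂ))) (1 : ℂ) τ := by
      simpa using (hasDerivAt_id τ).ofReal_comp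
    simpa using (h1.mul_const I).const_add ((β : ℂ))
  have hh : ∀ τ : ℝ, HasDerivAt (fun t : ℝ => G ((β : ℂ) + (t : ℂ) * I))
      (I * deriv G ((β : ℂ) + (τ : ℂ) * I)) τ := by
    intro τ
    have := ((hGd _ (hre τ)).hasDerivAt).scomp τ (hφ τ)
    simpa [Function.comp_def, smul_eq_mul] using this
  have hconth : Continuous (fun τ : ℝ => G ((β : ℂ) + (τ : ℂ) * I)) :=
    continuous_iff_continuousAt.mpr fun τ => (hh τ).continuousAt
  have hconth' : Continuous (fun τ : ℝ => deriv G ((β : ℂ) + (τ : ℂ) * I)) :=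
    hdercont.comp_continuous hφcont fun τ => hre τ
  -- FTC
  have hkey : ∀ t ∈ Icc (0:ℝ) r, G ((β : ℂ) + (t : ℂ) * I)
      = G ((β : ℂ)) + ∫ u in (0:ℝ)..t, I * deriv G ((β : ℂ) + (u : ℂ) * I) := by
    intro t ht
    have h0 : ((β : ℂ) + ((0:ℝ) : ℂ) * I) = (β : ℂ) := by simp
    have h1 : (∫ u in (0:ℝ)..t, I * deriv G ((β : ℂ) + (u : ℂ) * I))
        = G ((β : ℂ) + (t : ℂ) * I) - G ((β : ℂ) + ((0:ℝ) : ℂ) * I) :=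
      intervalIntegral.integral_eq_sub_of_hasDerivAt (fun u _ => hh u)
        ((continuous_const.mul hconth').intervalIntegrable 0 t)
    rw [h1, h0]; ring
  -- bounds on Φ by M
  have hC : ∀ t ∈ Icc (0:ℝ) r, ‖Φ t‖ ≤ ∫ τ in (0:ℝ)..r, ‖Ft τ‖ := by
    intro t ht
    refine (intervalIntegral.norm_integral_le_integral_norm ht.2).trans ?_
    exact intervalIntegral.integral_mono_interval ht.1 ht.2 le_rfl
      (Filter.Eventually.of_forall fun x => norm_nonneg _) hF.norm
  have hbdd : BddAbove (Set.range fun t : Set.Icc (0:ℝ) r => ‖Φ t‖) := by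
    refine ⟨∫ τ in (0:ℝ)..r, ‖Ft τ‖, ?_⟩
    rintro x ⟨t, rfl⟩
    exact hC t t.2
  have hΦM : ∀ t ∈ Icc (0:ℝ) r, ‖Φ t‖ ≤ M := by
    intro t ht
    rw [hM]
    exact le_ciSup hbdd ⟨t, ht⟩
  have hM0 : 0 ≤ M := le_trans (norm_nonneg _) (hΦM r ⟨hr.le, le_rfl⟩)
  -- Fubini
  set μ : Measure ℝ := volume.restrict (Ioc (0:ℝ) r) with hμ
  haveI : IsFiniteMeasure μ := by
    constructor
    rw [hμ, Measure.restrict_apply_univ]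
    exact measure_Ioc_lt_top
  set d : ℝ → ℂ := fun u => I * deriv G ((β : ℂ) + (u : ℂ) * I) with hd
  have hdcont : Continuous d := continuous_const.mul hconth'
  have hswap : (∫ t in (0:ℝ)..r, (∫ u in (0:ℝ)..t, d u) * Ft t)
      = ∫ u in (0:ℝ)..r, d u * Φ u := by
    set K : ℝ → ℝ → ℂ := fun u t => if u ≤ t then d u * Ft t else 0 with hK
    have hKint : Integrable (Function.uncurry K) (μ.prod μ) := by
      have h1 : Integrable (fun p : ℝ × ℝ => d p.1 * Ft p.2) (μ.prod μ) :=
        Integrable.mul_prod (hdcont.integrableOn_Ioc) hF.1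
      have h2 : Function.uncurry K
          = {p : ℝ × ℝ | p.1 ≤ p.2}.indicator (fun p => d p.1 * Ft p.2) := by
        funext p
        by_cases hp : p.1 ≤ p.2 <;>
          simp [Function.uncurry, hK, hp, Set.indicator]
      rw [h2]
      exact h1.indicator (measurableSet_le measurable_fst measurable_snd)
    have hs := MeasureTheory.integral_integral_swap (f := K) hKint
    have hleft : (∫ u, ∫ t, K u t ∂μ ∂μ) = ∫ u in (0:ℝ)..r, d u * Φ u := by
      rw [intervalIntegral.integral_of_le hr.le]
      apply setIntegral_congr_fun measurableSet_Ioc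
      intro u hu
      show (∫ t, K u t ∂μ) = d u * Φ u
      have h2 : (fun t => K u t) = (Ici u).indicator (fun t => d u * Ft t) := by
        funext t
        by_cases h : u ≤ t <;> simp [hK, h, Set.indicator]
      have h3 : Ioc (0:ℝ) r ∩ Ici u = Icc u r := by
        ext x
        simp only [mem_inter_iff, mem_Ioc, mem_Icc, mem_Ici]
        constructor
        · rintro ⟨⟨_, h2'⟩, h3'⟩; exact ⟨h3', h2'⟩
        · rintro ⟨h1', h2'⟩; exact ⟨⟨hu.1.trans_le h1', h2'⟩, h1'⟩
      have h4 : Φ u = ∫ t in Ioc u r, Ft t := intervalIntegral.integral_of_le hu.2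
      rw [h2, setIntegral_indicator measurableSet_Ici, h3,
        integral_Icc_eq_integral_Ioc, integral_const_mul, h4]
    have hright : (∫ t, ∫ u, K u t ∂μ ∂μ)
        = ∫ t in (0:ℝ)..r, (∫ u in (0:ℝ)..t, d u) * Ft t := by
      rw [intervalIntegral.integral_of_le hr.le]
      apply setIntegral_congr_fun measurableSet_Ioc
      intro t ht
      show (∫ u, K u t ∂μ) = (∫ u in (0:ℝ)..t, d u) * Ft t
      have h2 : (fun u => K u t) = (Iic t).indicator (fun u => d u * Ft t) := by
        funext u
        by_cases h : u ≤ t <;> simp [hK, h, Set.indicator]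
      rw [h2, setIntegral_indicator measurableSet_Iic, Ioc_inter_Iic,
        min_eq_right ht.2, integral_mul_const, intervalIntegral.integral_of_le ht.1.le]
    rw [← hright, ← hs, hleft]
  -- main identity
  have hstep : (∫ τ in (0:ℝ)..r, G ((β : ℂ) + (τ : ℂ) * I) * Ft τ)
      = G ((β : ℂ)) * Φ 0 + ∫ u in (0:ℝ)..r, d u * Φ u := by
    have hPcont : Continuous (fun t : ℝ => ∫ u in (0:ℝ)..t, d u) :=
      intervalIntegral.continuous_primitive (fun a b => hdcont.intervalIntegrable a b) 0
    have e1 : (∫ τ in (0:ℝ)..r, G ((β : ℂ) + (τ : ℂ) * I) * Ft τ)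
        = ∫ τ in (0:ℝ)..r,
            (G ((β : ℂ)) * Ft τ + (∫ u in (0:ℝ)..τ, d u) * Ft τ) := by
      apply intervalIntegral.integral_congr
      intro τ hτ
      rw [uIcc_of_le hr.le] at hτ
      show G ((β : ℂ) + (τ : ℂ) * I) * Ft τ
          = G ((β : ℂ)) * Ft τ + (∫ u in (0:ℝ)..τ, d u) * Ft τ
      rw [hkey τ hτ]
      ring
    rw [e1, intervalIntegral.integral_add (hF.const_mul _)
      (hF.continuousOn_mul hPcont.continuousOn),
      intervalIntegral.integral_const_mul, hswap]
  -- norms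
  have hnd : ∀ u : ℝ, ‖d u‖ = ‖deriv G ((β : ℂ) + (u : ℂ) * I)‖ := by
    intro u; rw [hd]; simp
  have hbound2 : ‖∫ u in (0:ℝ)..r, d u * Φ u‖
      ≤ (∫ u in (0:ℝ)..r, ‖deriv G ((β : ℂ) + (u : ℂ) * I)‖) * M := by
    have hIoc : Set.uIoc (0:ℝ) r = Ioc 0 r := uIoc_of_le hr.le
    have hae : ∀ᵐ t ∂volume.restrict (Set.uIoc (0:ℝ) r),
        ‖d t * Φ t‖ ≤ ‖deriv G ((β : ℂ) + (t : ℂ) * I)‖ * M := by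
      rw [hIoc]
      filter_upwards [ae_restrict_mem measurableSet_Ioc] with t ht
      rw [norm_mul, hnd t]
      exact mul_le_mul_of_nonneg_left (hΦM t (Ioc_subset_Icc_self ht)) (norm_nonneg _)
    have hgint : IntervalIntegrable
        (fun t => ‖deriv G ((β : ℂ) + (t : ℂ) * I)‖ * M) volume 0 r :=
      (hconth'.norm.mul continuous_const).intervalIntegrable 0 r
    have := intervalIntegral.norm_integral_le_abs_of_norm_le hae hgint
    calc ‖∫ u in (0:ℝ)..r, d u * Φ u‖
        ≤ |∫ t in (0:ℝ)..r, ‖deriv G ((β : ℂ) + (t : ℂ) * I)‖ * M| := this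
      _ = ∫ t in (0:ℝ)..r, ‖deriv G ((β : ℂ) + (t : ℂ) * I)‖ * M := by
          apply _root_.abs_of_nonneg
          apply intervalIntegral.integral_nonneg hr.le
          intro u _
          positivity
      _ = (∫ u in (0:ℝ)..r, ‖deriv G ((β : ℂ) + (u : ℂ) * I)‖) * M :=
          intervalIntegral.integral_mul_const _ _
  -- Cauchy–Schwarz
  have hCS : (∫ u in (0:ℝ)..r, ‖deriv G ((β : ℂ) + (u : ℂ) * I)‖)
      ≤ Real.sqrt
          ((∫ τ in (0 : ℝ)..r,
              ‖deriv G ((β : ℂ) + (τ : ℂ) * I) / G ((β : ℂ) + (τ : ℂ) * I)‖ ^ 2) *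
            (∫ τ in (0 : ℝ)..r, ‖G ((β : ℂ) + (τ : ℂ) * I)‖ ^ 2)) := by
    set f1 : ℝ → ℂ := fun u => deriv G ((β:ℂ)+(u:ℂ)*I) / G ((β:ℂ)+(u:ℂ)*I) with hf1
    set f2 : ℝ → ℂ := fun u => G ((β:ℂ)+(u:ℂ)*I) with hf2
    have hf1c : Continuous f1 := hconth'.div hconth fun u => hGne _ (hre u)
    have hf2c : Continuous f2 := hconth
    have heq : ∀ u : ℝ, ‖deriv G ((β:ℂ)+(u:ℂ)*I)‖ = ‖f1 u‖ * ‖f2 u‖ := by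
      intro u
      show _ = ‖deriv G ((β:ℂ)+(u:ℂ)*I) / G ((β:ℂ)+(u:ℂ)*I)‖ * ‖G ((β:ℂ)+(u:ℂ)*I)‖
      rw [← norm_mul, div_mul_cancel₀ _ (hGne _ (hre u))]
    have hmem : ∀ (f : ℝ → ℂ), Continuous f → MemLp f (ENNReal.ofReal 2) μ := by
      intro f hf
      obtain ⟨C, hC⟩ := (isCompact_Icc (a := (0:ℝ)) (b := r)).exists_bound_of_continuousOn
        hf.continuousOn
      refine MemLp.of_bound hf.aestronglyMeasurable C ?_
      rw [hμ]
      filter_upwards [ae_restrict_mem measurableSet_Ioc] with x hx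
      exact hC x (Ioc_subset_Icc_self hx)
    have hpq : Real.HolderConjugate 2 2 := Real.HolderConjugate.two_two
    have hH := MeasureTheory.integral_mul_norm_le_Lp_mul_Lq (μ := μ) hpq
      (hmem f1 hf1c) (hmem f2 hf2c)
    have hrpow : ∀ x : ℝ, x ^ (2:ℕ) = x ^ (2:ℝ) := fun x => by
      rw [show (2:ℝ) = ((2:ℕ):ℝ) by norm_num, Real.rpow_natCast]
    have e2 : (∫ u in (0:ℝ)..r, ‖deriv G ((β:ℂ)+(u:ℂ)*I)‖) = ∫ u, ‖f1 u‖ * ‖f2 u‖ ∂μ := by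
      rw [hμ, ← intervalIntegral.integral_of_le hr.le]
      exact intervalIntegral.integral_congr fun u _ => heq u
    have e3 : (∫ τ in (0 : ℝ)..r,
          ‖deriv G ((β : ℂ) + (τ : ℂ) * I) / G ((β : ℂ) + (τ : ℂ) * I)‖ ^ 2)
        = ∫ a, ‖f1 a‖ ^ (2:ℝ) ∂μ := by
      rw [hμ, intervalIntegral.integral_of_le hr.le]
      exact setIntegral_congr_fun measurableSet_Ioc fun x _ => hrpow _
    have e4 : (∫ τ in (0 : ℝ)..r, ‖G ((β : ℂ) + (τ : ℂ) * I)‖ ^ 2)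
        = ∫ a, ‖f2 a‖ ^ (2:ℝ) ∂μ := by
      rw [hμ, intervalIntegral.integral_of_le hr.le]
      exact setIntegral_congr_fun measurableSet_Ioc fun x _ => hrpow _
    have hA : 0 ≤ ∫ a, ‖f1 a‖ ^ (2:ℝ) ∂μ :=
      integral_nonneg fun a => Real.rpow_nonneg (norm_nonneg _) _
    rw [e2, e3, e4, Real.sqrt_mul hA, Real.sqrt_eq_rpow, Real.sqrt_eq_rpow]
    exact hH
  -- conclusion
  calc ‖∫ τ in (0:ℝ)..r, G ((β : ℂ) + (τ : ℂ) * I) * Ft τ‖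
      = ‖G ((β : ℂ)) * Φ 0 + ∫ u in (0:ℝ)..r, d u * Φ u‖ := by rw [hstep]
    _ ≤ ‖G ((β : ℂ)) * Φ 0‖ + ‖∫ u in (0:ℝ)..r, d u * Φ u‖ := norm_add_le _ _
    _ ≤ ‖G ((β : ℂ))‖ * M + (∫ u in (0:ℝ)..r, ‖deriv G ((β : ℂ) + (u : ℂ) * I)‖) * M := by
        refine add_le_add ?_ hbound2
        rw [norm_mul]
        exact mul_le_mul_of_nonneg_left (hΦM 0 ⟨le_rfl, hr.le⟩) (norm_nonneg _)
    _ ≤ ‖G ((β : ℂ))‖ * M + Real.sqrt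
          ((∫ τ in (0 : ℝ)..r,
              ‖deriv G ((β : ℂ) + (τ : ℂ) * I) / G ((β : ℂ) + (τ : ℂ) * I)‖ ^ 2) *
            (∫ τ in (0 : ℝ)..r, ‖G ((β : ℂ) + (τ : ℂ) * I)‖ ^ 2)) * M := by
        exact add_le_add le_rfl (mul_le_mul_of_nonneg_right hCS hM0)
    _ = M * (‖G ((β : ℂ))‖ + Real.sqrt
          ((∫ τ in (0 : ℝ)..r,
              ‖deriv G ((β : ℂ) + (τ : ℂ) * I) / G ((β : ℂ) + (τ : ℂ) * I)‖ ^ 2) *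
            (∫ τ in (0 : ℝ)..r, ‖G ((β : ℂ) + (τ : ℂ) * I)‖ ^ 2))) := by ring
end

section
/- Suppose β, r > 0, y ≥ 0, and g is a function on the primes with |g(p)| ≤ 1 for all primes p; set G(s) := ∏_{p ≤ y prime} (1 − g(p)p^{−s})^{−1} and G*(s) := ∏_{p ≤ √y prime} (1 − g(p)p^{−s})^{−1}. Let F be any function integrable on the vertical segment [β, β+ir]. Then |∫_β^{β+ir} G(s)F(s) ds| ≤ M*·( |G*(β)| + √( ∫_β^{β+ir} |(G'/G)(s)|² d|s| · ∫_β^{β+ir} |G*(s)|² d|s| ) ), where M* := sup_{0 ≤ t ≤ r} ( |∫_{β+it}^{β+ir} F(s) ds| · ∏_{√y < p ≤ y prime} |1 − g(p)p^{−β−it}|^{−1} ). -/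
open Complex MeasureTheory Set

lemma parts_swap {r : ℝ} (hr : 0 ≤ r) (c f : ℝ → ℂ) (hc : Continuous c)
    (hf : IntervalIntegrable f volume 0 r) :
    ∫ τ in (0:ℝ)..r, (∫ σ in (0:ℝ)..τ, c σ) * f τ
      = ∫ σ in (0:ℝ)..r, c σ * ∫ τ in σ..r, f τ := by
  have hfI : IntegrableOn f (Ioc 0 r) volume := hf.1
  have hcI : IntegrableOn c (Ioc 0 r) volume := hc.integrableOn_Ioc
  set μ : Measure ℝ := volume.restrict (Ioc 0 r) with hμ
  have hS : MeasurableSet {z : ℝ × ℝ | z.1 ≤ z.2} :=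
    (isClosed_le continuous_fst continuous_snd).measurableSet
  set W : ℝ × ℝ → ℂ := ({z : ℝ × ℝ | z.1 ≤ z.2}).indicator (fun z => c z.1 * f z.2) with hW
  have hWint : Integrable W (μ.prod μ) := by
    refine Integrable.indicator ?_ hS
    exact MeasureTheory.Integrable.mul_prod hcI hfI
  have swap := MeasureTheory.integral_integral_swap (μ := μ) (ν := μ)
      (f := fun σ τ => W (σ, τ)) (by exact hWint)
  have hL : (∫ σ, ∫ τ, W (σ, τ) ∂μ ∂μ) = ∫ σ in Ioc 0 r, c σ * ∫ τ in σ..r, f τ := by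
    refine setIntegral_congr_fun measurableSet_Ioc (fun σ hσ => ?_)
    have h1 : (fun τ => W (σ, τ)) = (Ici σ).indicator (fun τ => c σ * f τ) := by
      funext τ; by_cases h : σ ≤ τ <;>
        simp [hW, Set.indicator, h]
    rw [h1, hμ, integral_indicator measurableSet_Ici, Measure.restrict_restrict measurableSet_Ici]
    have h2 : Ici σ ∩ Ioc 0 r = Icc σ r := by
      ext x; constructor
      · rintro ⟨h3, _, h5⟩; exact ⟨h3, h5⟩
      · rintro ⟨h3, h5⟩; exact ⟨h3, lt_of_lt_of_le hσ.1 h3, h5⟩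
    rw [h2, integral_Icc_eq_integral_Ioc, MeasureTheory.integral_const_mul,
      ← intervalIntegral.integral_of_le hσ.2]
  have hR : (∫ τ, ∫ σ, W (σ, τ) ∂μ ∂μ) = ∫ τ in Ioc 0 r, (∫ σ in (0:ℝ)..τ, c σ) * f τ := by
    refine setIntegral_congr_fun measurableSet_Ioc (fun τ hτ => ?_)
    have h1 : (fun σ => W (σ, τ)) = (Iic τ).indicator (fun σ => c σ * f τ) := by
      funext σ; by_cases h : σ ≤ τ <;> simp [hW, Set.indicator, h]
    rw [h1, hμ, integral_indicator measurableSet_Iic, Measure.restrict_restrict measurableSet_Iic]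
    have h2 : Iic τ ∩ Ioc 0 r = Ioc 0 τ := by
      ext x; constructor
      · rintro ⟨h3, h4, _⟩; exact ⟨h4, h3⟩
      · rintro ⟨h3, h4⟩; exact ⟨h4, h3, h4.trans hτ.2⟩
    rw [h2, integral_mul_const, ← intervalIntegral.integral_of_le hτ.1.le]
  rw [intervalIntegral.integral_of_le hr, intervalIntegral.integral_of_le hr, ← hL, ← hR, swap]

lemma cs_interval {r : ℝ} (hr : 0 ≤ r) (f1 f2 : ℝ → ℝ) (h1 : Continuous f1)
    (h2 : Continuous f2) (hn1 : ∀ x, 0 ≤ f1 x) (hn2 : ∀ x, 0 ≤ f2 x) :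
    ∫ x in (0:ℝ)..r, f1 x * f2 x
      ≤ Real.sqrt ((∫ x in (0:ℝ)..r, f1 x ^ 2) * (∫ x in (0:ℝ)..r, f2 x ^ 2)) := by
  set μ : Measure ℝ := volume.restrict (Ioc 0 r) with hμ
  have hpq : (2:ℝ).HolderConjugate 2 := Real.HolderConjugate.two_two
  have hmem : ∀ (f : ℝ → ℝ), Continuous f → MemLp f (ENNReal.ofReal 2) μ := by
    intro f hf
    obtain ⟨C, hC⟩ := (isCompact_Icc (a := (0:ℝ)) (b := r)).exists_bound_of_continuousOn
      hf.continuousOn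
    refine MemLp.of_bound hf.aestronglyMeasurable C ?_
    exact (ae_restrict_mem measurableSet_Ioc).mono fun x hx => hC x (Ioc_subset_Icc_self hx)
  have key := integral_mul_le_Lp_mul_Lq_of_nonneg (μ := μ) hpq
    (Filter.Eventually.of_forall hn1) (Filter.Eventually.of_forall hn2)
    (hmem f1 h1) (hmem f2 h2)
  have hsq : ∀ (f : ℝ → ℝ), (fun a => f a ^ (2:ℝ)) = fun a => f a ^ 2 := by
    intro f; funext a; rw [← Real.rpow_natCast (f a) 2]; norm_num
  rw [hsq, hsq] at key
  have e1 : (0:ℝ) ≤ ∫ a, f1 a ^ 2 ∂μ := integral_nonneg fun a => sq_nonneg _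
  have e2 : (0:ℝ) ≤ ∫ a, f2 a ^ 2 ∂μ := integral_nonneg fun a => sq_nonneg _
  rw [intervalIntegral.integral_of_le hr, intervalIntegral.integral_of_le hr,
    intervalIntegral.integral_of_le hr]
  calc ∫ a in Ioc 0 r, f1 a * f2 a
      ≤ (∫ a, f1 a ^ 2 ∂μ) ^ ((1:ℝ)/2) * (∫ a, f2 a ^ 2 ∂μ) ^ ((1:ℝ)/2) := key
    _ = Real.sqrt ((∫ a, f1 a ^ 2 ∂μ) * (∫ a, f2 a ^ 2 ∂μ)) := by
        rw [Real.sqrt_eq_rpow, Real.mul_rpow e1 e2]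

lemma abstract_bound {r : ℝ} (hr : 0 ≤ r) (u c f A B : ℝ → ℂ) (q : ℝ → ℝ) (M : ℝ)
    (hu : ∀ τ, HasDerivAt u (c τ) τ) (hc : Continuous c)
    (hf : IntervalIntegrable f volume 0 r)
    (hAB : ∀ τ, u τ = A τ * B τ) (hA : Continuous A)
    (hq : ∀ τ, ‖c τ‖ = q τ * ‖u τ‖) (hqc : Continuous q) (hqnn : ∀ τ, 0 ≤ q τ)
    (hM : ∀ t ∈ Icc (0:ℝ) r, ‖∫ τ in t..r, f τ‖ * ‖B t‖ ≤ M) :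
    ‖∫ τ in (0:ℝ)..r, u τ * f τ‖ ≤
      M * (‖A 0‖ + Real.sqrt ((∫ τ in (0:ℝ)..r, q τ ^ 2) *
        (∫ τ in (0:ℝ)..r, ‖A τ‖ ^ 2))) := by
  have hM0 : 0 ≤ M := by
    have := hM r ⟨hr, le_refl r⟩
    simpa [intervalIntegral.integral_same] using this
  set Φ : ℝ → ℂ := fun t => ∫ τ in t..r, f τ with hΦ
  have hΦcont : ContinuousOn Φ (Icc 0 r) := by
    have hIcc : IntegrableOn f (Icc 0 r) volume :=
      (intervalIntegrable_iff_integrableOn_Icc_of_le hr).mp hf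
    have hprim : ContinuousOn (fun t => ∫ τ in (0:ℝ)..t, f τ) (Icc 0 r) := by
      have := intervalIntegral.continuousOn_primitive_interval
        (a := (0:ℝ)) (b := r) (μ := volume) (by rwa [uIcc_of_le hr])
      rwa [uIcc_of_le hr] at this
    have heq : ∀ t ∈ Icc (0:ℝ) r, (∫ τ in (0:ℝ)..r, f τ) - ∫ τ in (0:ℝ)..t, f τ = Φ t := by
      intro t ht
      have h1 : IntervalIntegrable f volume 0 t :=
        hf.mono_set (by rw [uIcc_of_le hr, uIcc_of_le ht.1]; exact Icc_subset_Icc le_rfl ht.2)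
      have h2 : IntervalIntegrable f volume t r :=
        hf.mono_set (by rw [uIcc_of_le hr, uIcc_of_le ht.2]; exact Icc_subset_Icc ht.1 le_rfl)
      rw [← intervalIntegral.integral_add_adjacent_intervals h1 h2]
      ring
    exact (continuousOn_const.sub hprim).congr fun t ht => (heq t ht).symm
  have hfund : ∀ τ : ℝ, ∫ σ in (0:ℝ)..τ, c σ = u τ - u 0 := fun τ =>
    intervalIntegral.integral_eq_sub_of_hasDerivAt (fun x _ => hu x)
      (hc.intervalIntegrable 0 τ)
  have hmulint : IntervalIntegrable (fun τ => (∫ σ in (0:ℝ)..τ, c σ) * f τ) volume 0 r :=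
    hf.continuousOn_mul
      ((intervalIntegral.continuous_primitive (fun a b => hc.intervalIntegrable a b)
        0).continuousOn)
  have step1 : ∫ τ in (0:ℝ)..r, u τ * f τ = u 0 * Φ 0 + ∫ σ in (0:ℝ)..r, c σ * Φ σ := by
    have h1 : EqOn (fun τ => u τ * f τ)
        (fun τ => u 0 * f τ + (∫ σ in (0:ℝ)..τ, c σ) * f τ) (uIcc 0 r) := by
      intro τ _; simp only [hfund τ]; ring
    rw [intervalIntegral.integral_congr h1,
      intervalIntegral.integral_add (hf.const_mul _) hmulint,
      intervalIntegral.integral_const_mul, parts_swap hr c f hc hf]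
  rw [step1]
  have hbound1 : ‖u 0 * Φ 0‖ ≤ M * ‖A 0‖ := by
    rw [hAB 0, norm_mul, norm_mul]
    calc ‖A 0‖ * ‖B 0‖ * ‖Φ 0‖ = (‖Φ 0‖ * ‖B 0‖) * ‖A 0‖ := by ring
      _ ≤ M * ‖A 0‖ :=
        mul_le_mul_of_nonneg_right (hM 0 ⟨le_refl _, hr⟩) (norm_nonneg _)
  have hcont2 : ContinuousOn (fun σ => ‖c σ * Φ σ‖) (uIcc 0 r) := by
    rw [uIcc_of_le hr]; exact (hc.continuousOn.mul hΦcont).norm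
  have hbound2 : (∫ σ in (0:ℝ)..r, ‖c σ * Φ σ‖)
      ≤ ∫ σ in (0:ℝ)..r, M * (q σ * ‖A σ‖) := by
    apply intervalIntegral.integral_mono_on hr
      (hcont2.intervalIntegrable)
      ((continuous_const.mul (hqc.mul hA.norm)).intervalIntegrable 0 r)
    intro σ hσ
    have : ‖c σ * Φ σ‖ = (q σ * ‖A σ‖) * (‖Φ σ‖ * ‖B σ‖) := by
      rw [norm_mul, hq σ, hAB σ, norm_mul]; ring
    rw [this]
    calc (q σ * ‖A σ‖) * (‖Φ σ‖ * ‖B σ‖) ≤ (q σ * ‖A σ‖) * M :=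
          mul_le_mul_of_nonneg_left (hM σ hσ) (mul_nonneg (hqnn σ) (norm_nonneg _))
      _ = M * (q σ * ‖A σ‖) := by ring
  calc ‖u 0 * Φ 0 + ∫ σ in (0:ℝ)..r, c σ * Φ σ‖
      ≤ ‖u 0 * Φ 0‖ + ‖∫ σ in (0:ℝ)..r, c σ * Φ σ‖ := norm_add_le _ _
    _ ≤ ‖u 0 * Φ 0‖ + ∫ σ in (0:ℝ)..r, ‖c σ * Φ σ‖ := by
        gcongr
        exact intervalIntegral.norm_integral_le_integral_norm hr
    _ ≤ M * ‖A 0‖ + ∫ σ in (0:ℝ)..r, M * (q σ * ‖A σ‖) := add_le_add hbound1 hbound2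
    _ = M * ‖A 0‖ + M * ∫ σ in (0:ℝ)..r, q σ * ‖A σ‖ := by
        rw [intervalIntegral.integral_const_mul]
    _ ≤ M * ‖A 0‖ + M * Real.sqrt ((∫ τ in (0:ℝ)..r, q τ ^ 2) *
          (∫ τ in (0:ℝ)..r, ‖A τ‖ ^ 2)) := by
        gcongr
        exact cs_interval hr q (fun τ => ‖A τ‖) hqc hA.norm hqnn (fun τ => norm_nonneg _)
    _ = M * (‖A 0‖ + Real.sqrt ((∫ τ in (0:ℝ)..r, q τ ^ 2) *
          (∫ τ in (0:ℝ)..r, ‖A τ‖ ^ 2))) := by ring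

/-- Lemma 2: a variant of the Fubini/Cauchy–Schwarz bound for integrals of an Euler
product `G(s) = ∏_{p ≤ y} (1 - g(p)p^{-s})⁻¹` against an integrable `F` along the
vertical segment `[β, β + ir]`, where the factors with `√y < p ≤ y` are absorbed
into the sup term `M*` and `G*` keeps only the primes `p ≤ √y`. -/
theorem euler_product_integral_bound_variant
    (β r y : ℝ) (hβ : 0 < β) (hr : 0 < r) (hy : 0 ≤ y)
    (g : ℕ → ℂ) (hg : ∀ p : ℕ, p.Prime → ‖g p‖ ≤ 1)
    (G Gstar : ℂ → ℂ)
    (hG : G = fun s => ∏ p ∈ primesUpTo y, (1 - g p * (p : ℂ) ^ (-s))⁻¹)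
    (hGstar : Gstar = fun s =>
      ∏ p ∈ primesUpTo (Real.sqrt y), (1 - g p * (p : ℂ) ^ (-s))⁻¹)
    (F : ℂ → ℂ)
    (hF : IntervalIntegrable (fun τ : ℝ => F ((β : ℂ) + (τ : ℂ) * Complex.I)) volume 0 r)
    (Mstar : ℝ)
    (hMstar : Mstar = ⨆ t : Set.Icc (0 : ℝ) r,
      (‖∫ τ in (t : ℝ)..r, F ((β : ℂ) + (τ : ℂ) * Complex.I)‖ *
        ∏ p ∈ (primesUpTo y).filter (fun (p : ℕ) => Real.sqrt y < (p : ℝ)),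
          ‖1 - g p * (p : ℂ) ^ (-((β : ℂ) + ((t : ℝ) : ℂ) * Complex.I))‖⁻¹)) :
    ‖∫ τ in (0 : ℝ)..r,
        G ((β : ℂ) + (τ : ℂ) * Complex.I) * F ((β : ℂ) + (τ : ℂ) * Complex.I)‖ ≤
      Mstar * (‖Gstar (β : ℂ)‖ +
        Real.sqrt
          ((∫ τ in (0 : ℝ)..r,
              ‖deriv G ((β : ℂ) + (τ : ℂ) * Complex.I) /
                G ((β : ℂ) + (τ : ℂ) * Complex.I)‖ ^ 2) *
            (∫ τ in (0 : ℝ)..r, ‖Gstar ((β : ℂ) + (τ : ℂ) * Complex.I)‖ ^ 2))) := by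
  -- basic facts about the Euler factors
  have hprimesP : ∀ z : ℝ, ∀ p ∈ primesUpTo z, p.Prime := fun z p hp =>
    (Finset.mem_filter.mp hp).2
  have hnormval : ∀ p : ℕ, p.Prime → ∀ s : ℂ, ‖(p:ℂ) ^ (-s)‖ = (p:ℝ) ^ (-s.re) := by
    intro p hp s
    have h0 : (0:ℝ) < (p:ℝ) := by exact_mod_cast hp.pos
    rw [show ((p:ℂ)) = (((p:ℝ)):ℂ) by push_cast; ring,
      Complex.norm_cpow_eq_rpow_re_of_pos h0, Complex.neg_re]
  have hp1 : ∀ p : ℕ, p.Prime → (1:ℝ) < (p:ℝ) := by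
    intro p hp; exact_mod_cast hp.one_lt
  have hplt : ∀ p : ℕ, p.Prime → ∀ s : ℂ, 0 < s.re → ‖g p * (p:ℂ) ^ (-s)‖ < 1 := by
    intro p hp s hs
    have hnorm : ‖(p:ℂ) ^ (-s)‖ < 1 := by
      rw [hnormval p hp s]
      exact Real.rpow_lt_one_of_one_lt_of_neg (hp1 p hp) (by linarith)
    calc ‖g p * (p:ℂ) ^ (-s)‖ = ‖g p‖ * ‖(p:ℂ) ^ (-s)‖ := norm_mul _ _
      _ ≤ 1 * ‖(p:ℂ) ^ (-s)‖ :=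
          mul_le_mul_of_nonneg_right (hg p hp) (norm_nonneg _)
      _ < 1 := by rw [one_mul]; exact hnorm
  have hne : ∀ p : ℕ, p.Prime → ∀ s : ℂ, 0 < s.re → 1 - g p * (p:ℂ) ^ (-s) ≠ 0 := by
    intro p hp s hs h
    have h1 : g p * (p:ℂ) ^ (-s) = 1 := (sub_eq_zero.mp h).symm
    have h2 := hplt p hp s hs
    rw [h1] at h2; simp at h2
  -- the open right half-plane
  have hUo : IsOpen {s : ℂ | 0 < s.re} := isOpen_lt continuous_const Complex.continuous_re
  have hre : ∀ t : ℝ, ((β:ℂ) + (t:ℂ) * Complex.I).re = β := by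
    intro t
    simp [Complex.add_re, Complex.mul_re]
  have hmem : ∀ τ : ℝ, ((β:ℂ) + (τ:ℂ) * Complex.I) ∈ {s : ℂ | 0 < s.re} := by
    intro τ; simp only [Set.mem_setOf_eq, hre]; exact hβ
  -- differentiability of Euler products on the half-plane
  have hdiffP : ∀ P : Finset ℕ, (∀ p ∈ P, p.Prime) →
      DifferentiableOn ℂ (fun s => ∏ p ∈ P, (1 - g p * (p:ℂ) ^ (-s))⁻¹)
        {s : ℂ | 0 < s.re} := by
    intro P hP
    apply DifferentiableOn.fun_finsetProd
    intro p hp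
    have hp' := hP p hp
    have hd : Differentiable ℂ (fun s : ℂ => 1 - g p * (p:ℂ) ^ (-s)) := by
      apply (differentiable_const _).sub
      apply Differentiable.const_mul
      exact Differentiable.const_cpow (differentiable_id.neg)
        (Or.inl (Nat.cast_ne_zero.mpr hp'.pos.ne'))
    exact DifferentiableOn.inv hd.differentiableOn (fun s hs => hne p hp' s hs)
  have hGd : DifferentiableOn ℂ G {s : ℂ | 0 < s.re} := by
    rw [hG]; exact hdiffP _ (hprimesP y)
  have hGsd : DifferentiableOn ℂ Gstar {s : ℂ | 0 < s.re} := by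
    rw [hGstar]; exact hdiffP _ (hprimesP _)
  have hGderiv : ContinuousOn (deriv G) {s : ℂ | 0 < s.re} :=
    ((hGd.analyticOnNhd hUo).deriv).continuousOn
  have hlc : Continuous (fun τ : ℝ => (β:ℂ) + (τ:ℂ) * Complex.I) := by
    exact continuous_const.add (Complex.continuous_ofReal.mul continuous_const)
  -- G does not vanish on the line
  have hGne : ∀ τ : ℝ, G ((β:ℂ) + (τ:ℂ) * Complex.I) ≠ 0 := by
    intro τ
    rw [hG]
    refine Finset.prod_ne_zero_iff.mpr fun p hp => inv_ne_zero ?_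
    exact hne p (hprimesP y p hp) _ (hmem τ)
  -- derivative of G along the line
  have hu : ∀ τ : ℝ, HasDerivAt (fun σ : ℝ => G ((β:ℂ) + (σ:ℂ) * Complex.I))
      (deriv G ((β:ℂ) + (τ:ℂ) * Complex.I) * Complex.I) τ := by
    intro τ
    have h1 : HasDerivAt (fun τ : ℝ => (β:ℂ) + (τ:ℂ) * Complex.I) Complex.I τ := by
      simpa using ((Complex.ofRealCLM.hasDerivAt (x := τ)).mul_const Complex.I).const_add (β:ℂ)
    exact HasDerivAt.comp (𝕜 := ℝ) (x := τ)
      ((hGd.differentiableAt (hUo.mem_nhds (hmem τ))).hasDerivAt) h1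
  have hccont : Continuous (fun τ : ℝ => deriv G ((β:ℂ) + (τ:ℂ) * Complex.I) * Complex.I) :=
    (hGderiv.comp_continuous hlc hmem).mul continuous_const
  have hGlc : Continuous (fun τ : ℝ => G ((β:ℂ) + (τ:ℂ) * Complex.I)) :=
    hGd.continuousOn.comp_continuous hlc hmem
  have hAcont : Continuous (fun τ : ℝ => Gstar ((β:ℂ) + (τ:ℂ) * Complex.I)) :=
    hGsd.continuousOn.comp_continuous hlc hmem
  -- split of the Euler product
  set Q : Finset ℕ := (primesUpTo y).filter (fun (p : ℕ) => Real.sqrt y < (p : ℝ)) with hQ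
  have hfilter_eq : (primesUpTo y).filter (fun (p : ℕ) => ¬ Real.sqrt y < (p : ℝ))
      = primesUpTo (Real.sqrt y) := by
    ext p
    simp only [primesUpTo, Finset.mem_filter, Finset.mem_Iic, not_lt]
    constructor
    · rintro ⟨⟨hpy, hpp⟩, hple⟩
      exact ⟨Nat.le_floor hple, hpp⟩
    · rintro ⟨hps, hpp⟩
      have h1 : (p:ℝ) ≤ Real.sqrt y :=
        le_trans (Nat.cast_le.mpr hps) (Nat.floor_le (Real.sqrt_nonneg y))
      have h2 : (1:ℝ) < (p:ℝ) := hp1 p hpp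
      have h3 : (1:ℝ) ≤ y := Real.one_le_sqrt.mp (by linarith)
      have h4 : Real.sqrt y ≤ y := by
        nlinarith [Real.sq_sqrt hy, Real.sqrt_nonneg y]
      exact ⟨⟨Nat.le_floor (h1.trans h4), hpp⟩, h1⟩
  have hsplit : ∀ s : ℂ, G s = Gstar s *
      ∏ p ∈ Q, (1 - g p * (p:ℂ) ^ (-s))⁻¹ := by
    intro s
    rw [hG, hGstar]
    simp only []
    rw [← hfilter_eq, mul_comm,
      Finset.prod_filter_mul_prod_filter_not (primesUpTo y)
        (fun (p : ℕ) => Real.sqrt y < (p : ℝ))]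
  -- norm of the absorbed factor
  have hBnorm : ∀ t : ℝ, ‖∏ p ∈ Q, (1 - g p * (p:ℂ) ^ (-((β:ℂ) + (t:ℂ) * Complex.I)))⁻¹‖
      = ∏ p ∈ Q, ‖1 - g p * (p:ℂ) ^ (-((β:ℂ) + (t:ℂ) * Complex.I))‖⁻¹ := by
    intro t
    rw [norm_prod]
    exact Finset.prod_congr rfl fun p _ => norm_inv _
  -- lower bound for the factors on the line
  have hppow : ∀ p : ℕ, p.Prime → (p:ℝ) ^ (-β) < 1 := fun p hp =>
    Real.rpow_lt_one_of_one_lt_of_neg (hp1 p hp) (by linarith)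
  have hnormge : ∀ p : ℕ, p.Prime → ∀ t : ℝ,
      1 - (p:ℝ) ^ (-β) ≤ ‖1 - g p * (p:ℂ) ^ (-((β:ℂ) + (t:ℂ) * Complex.I))‖ := by
    intro p hp t
    have h1 : ‖g p * (p:ℂ) ^ (-((β:ℂ) + (t:ℂ) * Complex.I))‖ ≤ (p:ℝ) ^ (-β) := by
      rw [norm_mul, hnormval p hp, hre]
      exact mul_le_of_le_one_left (Real.rpow_nonneg (by positivity) _) (hg p hp)
    calc 1 - (p:ℝ) ^ (-β)
        ≤ ‖(1:ℂ)‖ - ‖g p * (p:ℂ) ^ (-((β:ℂ) + (t:ℂ) * Complex.I))‖ := by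
          rw [norm_one]; linarith
      _ ≤ ‖1 - g p * (p:ℂ) ^ (-((β:ℂ) + (t:ℂ) * Complex.I))‖ := norm_sub_norm_le _ _
  -- the sup is an upper bound
  have hbdd : BddAbove (Set.range fun t : Set.Icc (0:ℝ) r =>
      (‖∫ τ in (t : ℝ)..r, F ((β : ℂ) + (τ : ℂ) * Complex.I)‖ *
        ∏ p ∈ Q, ‖1 - g p * (p : ℂ) ^ (-((β : ℂ) + ((t : ℝ) : ℂ) * Complex.I))‖⁻¹)) := by
    refine ⟨(∫ τ in (0:ℝ)..r, ‖F ((β:ℂ) + (τ:ℂ) * Complex.I)‖) *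
      ∏ p ∈ Q, (1 - (p:ℝ) ^ (-β))⁻¹, ?_⟩
    rintro x ⟨t, rfl⟩
    have ht : (t:ℝ) ∈ Icc (0:ℝ) r := t.2
    refine mul_le_mul ?_ ?_ ?_ ?_
    · calc ‖∫ τ in (t:ℝ)..r, F ((β:ℂ) + (τ:ℂ) * Complex.I)‖
          ≤ ∫ τ in (t:ℝ)..r, ‖F ((β:ℂ) + (τ:ℂ) * Complex.I)‖ :=
            intervalIntegral.norm_integral_le_integral_norm ht.2
        _ ≤ ∫ τ in (0:ℝ)..r, ‖F ((β:ℂ) + (τ:ℂ) * Complex.I)‖ :=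
            intervalIntegral.integral_mono_interval ht.1 ht.2 le_rfl
              (Filter.Eventually.of_forall fun τ => norm_nonneg _) hF.norm
    · refine Finset.prod_le_prod (fun p _ => inv_nonneg.mpr (norm_nonneg _)) fun p hp => ?_
      have hpp := hprimesP y p (Finset.mem_filter.mp hp).1
      exact inv_anti₀ (by linarith [hppow p hpp]) (hnormge p hpp t)
    · exact Finset.prod_nonneg fun p _ => inv_nonneg.mpr (norm_nonneg _)
    · exact intervalIntegral.integral_nonneg hr.le (fun x _ => norm_nonneg _)
  -- the key sup bound
  have hM : ∀ t ∈ Icc (0:ℝ) r,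
      ‖∫ τ in t..r, F ((β:ℂ) + (τ:ℂ) * Complex.I)‖ *
        ‖∏ p ∈ Q, (1 - g p * (p:ℂ) ^ (-((β:ℂ) + (t:ℂ) * Complex.I)))⁻¹‖ ≤ Mstar := by
    intro t ht
    rw [hBnorm t, hMstar]
    exact le_ciSup hbdd (⟨t, ht⟩ : Set.Icc (0:ℝ) r)
  -- apply the abstract bound
  have key := abstract_bound hr.le
    (fun τ => G ((β:ℂ) + (τ:ℂ) * Complex.I))
    (fun τ => deriv G ((β:ℂ) + (τ:ℂ) * Complex.I) * Complex.I)
    (fun τ => F ((β:ℂ) + (τ:ℂ) * Complex.I))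
    (fun τ => Gstar ((β:ℂ) + (τ:ℂ) * Complex.I))
    (fun τ => ∏ p ∈ Q, (1 - g p * (p:ℂ) ^ (-((β:ℂ) + (τ:ℂ) * Complex.I)))⁻¹)
    (fun τ => ‖deriv G ((β:ℂ) + (τ:ℂ) * Complex.I) / G ((β:ℂ) + (τ:ℂ) * Complex.I)‖)
    Mstar hu hccont hF (fun τ => hsplit _) hAcont
    (fun τ => by
      beta_reduce
      rw [norm_mul, Complex.norm_I, mul_one, norm_div,
        div_mul_cancel₀ _ (norm_ne_zero_iff.mpr (hGne τ))])
    ((hGderiv.comp_continuous hlc hmem).div hGlc hGne).norm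
    (fun τ => norm_nonneg _) hM
  simp only [Complex.ofReal_zero, zero_mul, add_zero] at key
  exact key
end

section
/- Let y ≥ 2, let q ≥ 1, let 0 < β ≤ 1 and let t be real. Then |L(β+it, χ₀; y)| ≤ L(β, χ₀; y) · exp( − ∑_{p ≤ y prime, p ∤ q} (1 − cos(t·log p))/p ). -/
open Complex

/-- The truncated Euler product `L(s,χ;y) = ∏_{p ≤ y} (1 - χ(p) p^{-s})⁻¹`. -/
noncomputable def LSmooth {q : ℕ} (χ : DirichletCharacter ℂ q) (y : ℝ) (s : ℂ) : ℂ :=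
  ∏ p ∈ primesUpTo y, (1 - χ (p : ZMod q) * (p : ℂ) ^ (-s))⁻¹

/-- Key analytic inequality: for `0 ≤ r < 1`,
`|1 - r e^{iθ}|⁻¹ ≤ (1-r)⁻¹ exp(-r (1 - cos θ))`. -/
lemma key_ineq {r : ℝ} (hr0 : 0 ≤ r) (hr1 : r < 1) (θ : ℝ) :
    ‖(1 - (r : ℂ) * Complex.exp ((θ : ℂ) * Complex.I))⁻¹‖ ≤
      (1 - r)⁻¹ * Real.exp (-(r * (1 - Real.cos θ))) := by
  set z : ℂ := (r : ℂ) * Complex.exp ((θ : ℂ) * Complex.I) with hz_def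
  have hznorm : ‖z‖ = r := by
    rw [hz_def, norm_mul,
      Complex.norm_exp_ofReal_mul_I, Complex.norm_real, Real.norm_eq_abs, _root_.abs_of_nonneg hr0, mul_one]
  have hz1 : ‖z‖ < 1 := by rw [hznorm]; exact hr1
  have h1z : (1 : ℂ) - z ≠ 0 := by
    intro h
    have : (1 : ℂ) = z := by linear_combination h
    rw [← this] at hz1; simp at hz1
  have h1zpos : 0 < ‖(1 : ℂ) - z‖ := norm_pos_iff.mpr h1z
  have h1r : (0:ℝ) < 1 - r := by linarith
  -- the two HasSum statements
  have H1 : HasSum (fun n : ℕ => r ^ n / n * Real.cos (n * θ)) (-Real.log ‖(1:ℂ) - z‖) := by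
    have := Complex.hasSum_re (Complex.hasSum_taylorSeries_neg_log hz1)
    have hre : (-Complex.log (1 - z)).re = -Real.log ‖(1:ℂ) - z‖ := by
      rw [Complex.neg_re, Complex.log_re]
    rw [hre] at this
    convert this using 2 with n
    have hzn : z ^ n = ((r ^ n : ℝ) : ℂ) * Complex.exp (((n * θ : ℝ) : ℂ) * Complex.I) := by
      rw [hz_def, mul_pow, ← Complex.exp_nat_mul]
      push_cast
      ring_nf
    have hdiv : z ^ n / (n : ℂ) =
        (((r ^ n / n : ℝ)) : ℂ) * Complex.exp (((n * θ : ℝ) : ℂ) * Complex.I) := by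
      rw [hzn]
      push_cast
      ring
    rw [hdiv, Complex.re_ofReal_mul, Complex.exp_ofReal_mul_I_re]
  have H2 : HasSum (fun n : ℕ => r ^ n / n) (-Real.log (1 - r)) := by
    have hr1' : ‖(r : ℂ)‖ < 1 := by
      rw [Complex.norm_real, Real.norm_eq_abs, _root_.abs_of_nonneg hr0]; exact hr1
    have := Complex.hasSum_re (Complex.hasSum_taylorSeries_neg_log hr1')
    have hre : (-Complex.log (1 - (r:ℂ))).re = -Real.log (1 - r) := by
      rw [Complex.neg_re, Complex.log_re,
        show (1 : ℂ) - (r : ℂ) = ((1 - r : ℝ) : ℂ) by push_cast; ring,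
        Complex.norm_real, Real.norm_eq_abs, _root_.abs_of_pos h1r]
    rw [hre] at this
    convert this using 2 with n
    have : ((r : ℂ) ^ n / (n : ℂ)) = (((r ^ n / n : ℝ)) : ℂ) := by push_cast; ring
    rw [this, Complex.ofReal_re]
  have H3 : HasSum (fun n : ℕ => r ^ n / n - (if n = 1 then r * (1 - Real.cos θ) else 0))
      (-Real.log (1 - r) - r * (1 - Real.cos θ)) :=
    H2.sub (hasSum_ite_eq 1 _)
  have hle : -Real.log ‖(1:ℂ) - z‖ ≤ -Real.log (1 - r) - r * (1 - Real.cos θ) := by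
    refine hasSum_le (fun n => ?_) H1 H3
    rcases eq_or_ne n 1 with rfl | hn
    · have : r ^ 1 / ((1:ℕ) : ℝ) * Real.cos ((1:ℕ) * θ) =
          r ^ 1 / ((1:ℕ) : ℝ) - r * (1 - Real.cos θ) := by push_cast; ring
      simp only [if_pos rfl, eq_self_iff_true, if_true]
      rw [this]
    · simp only [hn, if_neg, if_false, sub_zero]
      have h1 : Real.cos (n * θ) ≤ 1 := Real.cos_le_one _
      have h2 : (0:ℝ) ≤ r ^ n / n := by positivity
      calc r ^ n / n * Real.cos (n * θ) ≤ r ^ n / n * 1 := by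
            exact mul_le_mul_of_nonneg_left h1 h2
        _ = r ^ n / n := by ring
  -- exponentiate
  have := Real.exp_le_exp.mpr hle
  rw [Real.exp_sub, Real.exp_neg, Real.exp_neg, Real.exp_log h1zpos, Real.exp_log h1r] at this
  rw [norm_inv]
  calc ‖(1:ℂ) - z‖⁻¹ ≤ (1 - r)⁻¹ / Real.exp (r * (1 - Real.cos θ)) := this
    _ = (1 - r)⁻¹ * Real.exp (-(r * (1 - Real.cos θ))) := by rw [Real.exp_neg]; ring

/-- Per-prime bound. -/
lemma prime_factor_bound {p : ℕ} (hp : p.Prime) {β : ℝ} (t : ℝ) (hβ0 : 0 < β) (hβ1 : β ≤ 1) :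
    ‖(1 - (p : ℂ) ^ (-((β : ℂ) + (t : ℂ) * Complex.I)))⁻¹‖ ≤
      (1 - (p : ℝ) ^ (-β))⁻¹ * Real.exp (-((1 - Real.cos (t * Real.log p)) / p)) := by
  have hp1 : (1 : ℝ) < p := by exact_mod_cast hp.one_lt
  have hp0 : (0 : ℝ) < p := by linarith
  set L : ℝ := Real.log p with hL
  have hL0 : 0 < L := Real.log_pos hp1
  set r : ℝ := (p : ℝ) ^ (-β) with hr
  have hr0 : 0 < r := Real.rpow_pos_of_pos hp0 _
  have hr1 : r < 1 := Real.rpow_lt_one_of_one_lt_of_neg hp1 (by linarith)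
  have hrexp : r = Real.exp (-(L * β)) := by
    rw [hr, Real.rpow_def_of_pos hp0, ← hL]; ring_nf
  -- rewrite the complex power
  have hcpow : (p : ℂ) ^ (-((β : ℂ) + (t : ℂ) * Complex.I)) =
      (r : ℂ) * Complex.exp (((-(L * t) : ℝ) : ℂ) * Complex.I) := by
    rw [Complex.cpow_def_of_ne_zero (by exact_mod_cast hp0.ne')]
    rw [← Complex.natCast_log, ← hL]
    have : (L : ℂ) * -((β : ℂ) + (t : ℂ) * Complex.I) =
        ((-(L * β) : ℝ) : ℂ) + ((-(L * t) : ℝ) : ℂ) * Complex.I := by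
      push_cast; ring
    rw [this, Complex.exp_add, hrexp]
    push_cast [Complex.ofReal_exp]
    ring
  rw [hcpow]
  have hkey := key_ineq hr0.le hr1 (-(L * t))
  refine hkey.trans ?_
  have hcos : Real.cos (-(L * t)) = Real.cos (t * L) := by
    rw [Real.cos_neg, mul_comm]
  rw [hcos]
  gcongr
  have hinv : (1 : ℝ) / p ≤ r := by
    have : (p : ℝ) ^ (-1 : ℝ) ≤ (p : ℝ) ^ (-β) :=
      (Real.rpow_le_rpow_left_iff hp1).mpr (by linarith)
    rwa [Real.rpow_neg_one, inv_eq_one_div] at this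
  have hc0 : 0 ≤ 1 - Real.cos (t * L) := by
    have := Real.cos_le_one (t * L); linarith
  calc (1 - Real.cos (t * L)) / p = (1 - Real.cos (t * L)) * (1 / p) := by ring
    _ ≤ (1 - Real.cos (t * L)) * r := mul_le_mul_of_nonneg_left hinv hc0
    _ = r * (1 - Real.cos (t * L)) := by ring

/-- For the principal character `χ₀ (mod q)` and `0 < β ≤ 1`:
`|L(β+it,χ₀;y)| ≤ L(β,χ₀;y) · exp(-∑_{p ≤ y, p ∤ q} (1 - cos(t log p))/p)`. -/
theorem LSmooth_principal_bound
    (y : ℝ) (hy : 2 ≤ y) (q : ℕ) (hq : 1 ≤ q) (β t : ℝ) (hβ0 : 0 < β) (hβ1 : β ≤ 1) :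
    ‖LSmooth (1 : DirichletCharacter ℂ q) y ((β : ℂ) + (t : ℂ) * Complex.I)‖ ≤
      ‖LSmooth (1 : DirichletCharacter ℂ q) y ((β : ℂ))‖ *
        Real.exp
          (-∑ p ∈ (primesUpTo y).filter (fun (p : ℕ) => ¬ p ∣ q),
            (1 - Real.cos (t * Real.log p)) / (p : ℝ)) := by
  classical
  -- reduce each LSmooth norm to a product over the "good" primes
  have hred : ∀ s : ℂ, ‖LSmooth (1 : DirichletCharacter ℂ q) y s‖ =
      ∏ p ∈ (primesUpTo y).filter (fun (p : ℕ) => ¬ p ∣ q), ‖(1 - (p : ℂ) ^ (-s))⁻¹‖ := by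
    intro s
    rw [LSmooth, norm_prod]
    rw [← Finset.prod_filter_of_ne (p := fun (p : ℕ) => ¬ p ∣ q)
      (f := fun (p : ℕ) => ‖(1 - (1 : DirichletCharacter ℂ q) ((p : ZMod q)) * (p : ℂ) ^ (-s))⁻¹‖)]
    · refine Finset.prod_congr rfl fun p hp => ?_
      simp only [Finset.mem_filter, primesUpTo] at hp
      obtain ⟨⟨_, hpp⟩, hpq⟩ := hp
      have : IsUnit ((p : ZMod q)) := (ZMod.isUnit_prime_iff_not_dvd hpp).mpr hpq
      rw [MulChar.one_apply (R := ZMod q) (R' := ℂ) this, one_mul]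
    · intro p hp hne
      simp only [primesUpTo, Finset.mem_filter] at hp
      by_contra hdvd
      have : ¬ IsUnit ((p : ZMod q)) := by
        rw [ZMod.isUnit_prime_iff_not_dvd hp.2]; simpa using hdvd
      rw [MulChar.map_nonunit _ this, zero_mul, sub_zero, inv_one, norm_one] at hne
      exact hne rfl
  rw [hred, hred]
  rw [← Finset.sum_neg_distrib, Real.exp_sum, ← Finset.prod_mul_distrib]
  refine Finset.prod_le_prod (fun p _ => norm_nonneg _) fun p hp => ?_
  simp only [Finset.mem_filter, primesUpTo] at hp
  obtain ⟨⟨_, hpp⟩, _⟩ := hp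
  have hp1 : (1 : ℝ) < (p : ℝ) := by exact_mod_cast hpp.one_lt
  have hp0 : (0 : ℝ) < (p : ℝ) := by linarith
  have hnormβ : ‖(1 - (p : ℂ) ^ (-(β : ℂ)))⁻¹‖ = (1 - (p : ℝ) ^ (-β))⁻¹ := by
    have h1 : ((p : ℂ)) ^ (-(β : ℂ)) = (((p : ℝ) ^ (-β) : ℝ) : ℂ) := by
      rw [Complex.ofReal_cpow hp0.le]
      norm_cast
    rw [h1]
    have h2 : (1 : ℂ) - (((p : ℝ) ^ (-β) : ℝ) : ℂ) = ((1 - (p : ℝ) ^ (-β) : ℝ) : ℂ) := by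
      push_cast; ring
    have hr1 : (p : ℝ) ^ (-β) < 1 := Real.rpow_lt_one_of_one_lt_of_neg hp1 (by linarith)
    rw [h2, norm_inv, Complex.norm_real, Real.norm_eq_abs, abs_of_pos (by linarith)]
  rw [hnormβ]
  exact prime_factor_bound hpp t hβ0 hβ1
end

section
/- There exists an absolute constant C such that the following holds: for every measurable function Φ : [0,∞) → [0,1] supported on [0,2], every x ≥ 2, every real β with 3/4 ≤ β ≤ 1, and all real t, T with 0 ≤ t ≤ T ≤ (log x)^{1/4}: | ∫_t^T x^{ir} Φ̆(β + ir) dr | ≤ C / log x. -/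
open Complex MeasureTheory

lemma osc_norm_exp (r a : ℝ) : ‖Complex.exp (Complex.I * r * a)‖ = 1 := by
  rw [Complex.norm_exp]
  simp [Complex.mul_re]

lemma osc_inner_le_len {t T : ℝ} (h : t ≤ T) (a : ℝ) :
    ‖∫ r in Set.Ioc t T, Complex.exp (Complex.I * r * a)‖ ≤ T - t := by
  have h1 : ‖∫ r in Set.Ioc t T, Complex.exp (Complex.I * r * a)‖
      ≤ 1 * (volume (Set.Ioc t T)).toReal := by
    refine norm_setIntegral_le_of_norm_le_const ?_ ?_
    · simp [Real.volume_Ioc]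
    · intro r _; rw [osc_norm_exp]
  simpa [Real.volume_Ioc, ENNReal.toReal_ofReal (sub_nonneg.2 h)] using h1

lemma osc_inner_le_two_div {t T a : ℝ} (h : t ≤ T) (ha : a ≠ 0) :
    ‖∫ r in Set.Ioc t T, Complex.exp (Complex.I * r * a)‖ ≤ 2 / |a| := by
  have hc : (Complex.I * a) ≠ 0 :=
    mul_ne_zero Complex.I_ne_zero (by exact_mod_cast ha)
  have key : (∫ r in Set.Ioc t T, Complex.exp (Complex.I * r * a))
      = (Complex.exp (Complex.I * a * T) - Complex.exp (Complex.I * a * t)) / (Complex.I * a) := by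
    rw [← intervalIntegral.integral_of_le h]
    rw [show (fun r : ℝ => Complex.exp (Complex.I * r * a))
        = fun r : ℝ => Complex.exp ((Complex.I * a) * r) from funext fun r => by ring_nf]
    exact integral_exp_mul_complex hc
  rw [key, norm_div]
  have hna : ‖Complex.I * (a : ℂ)‖ = |a| := by
    simp
  rw [hna]
  gcongr
  calc ‖Complex.exp (Complex.I * a * T) - Complex.exp (Complex.I * a * t)‖
      ≤ ‖Complex.exp (Complex.I * a * T)‖ + ‖Complex.exp (Complex.I * a * t)‖ := norm_sub_le _ _
    _ ≤ 2 := by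
        rw [show Complex.I * a * (T:ℂ) = Complex.I * T * a by ring,
          show Complex.I * a * (t:ℂ) = Complex.I * t * a by ring,
          osc_norm_exp, osc_norm_exp]; norm_num

lemma osc_mellin_eq (Φ : ℝ → ℝ) (x β r : ℝ) (hx : 0 < x) :
    (x : ℂ) ^ ((r : ℂ) * Complex.I) *
        mellin (fun v : ℝ => (Φ v : ℂ)) ((β : ℂ) + (r : ℂ) * Complex.I)
      = ∫ v in Set.Ioi (0:ℝ), ((Φ v * v ^ (β - 1) : ℝ) : ℂ)
          * Complex.exp (Complex.I * r * ((Real.log x + Real.log v : ℝ) : ℂ)) := by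
  rw [mellin, ← integral_const_mul]
  refine setIntegral_congr_fun measurableSet_Ioi (fun v hv => ?_)
  have hv0 : (0:ℝ) < v := hv
  have hvc : (v:ℂ) ≠ 0 := by exact_mod_cast hv0.ne'
  have hxc : (x:ℂ) ≠ 0 := by exact_mod_cast hx.ne'
  have e1 : (x:ℂ) ^ ((r:ℂ) * Complex.I)
      = Complex.exp (((Real.log x : ℂ)) * (r * Complex.I)) := by
    rw [Complex.cpow_def_of_ne_zero hxc, Complex.ofReal_log hx.le]
  have e2 : (v:ℂ) ^ ((β:ℂ) + (r:ℂ) * Complex.I - 1)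
      = Complex.exp ((Real.log v : ℂ) * ((β:ℂ) - 1)) *
        Complex.exp ((Real.log v : ℂ) * ((r:ℂ) * Complex.I)) := by
    rw [Complex.cpow_def_of_ne_zero hvc, Complex.ofReal_log hv0.le, ← Complex.exp_add]
    congr 1; ring
  have e3 : Complex.exp ((Real.log v : ℂ) * ((β:ℂ) - 1)) = ((v ^ (β - 1) : ℝ) : ℂ) := by
    rw [Real.rpow_def_of_pos hv0, Complex.ofReal_exp]
    push_cast
    ring_nf
  rw [smul_eq_mul, e1, e2, e3]
  rw [show Complex.exp ((Real.log x:ℂ) * ((r:ℂ) * Complex.I)) *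
        (((v ^ (β-1):ℝ):ℂ) * Complex.exp ((Real.log v:ℂ) * ((r:ℂ) * Complex.I)) * (Φ v:ℂ))
      = ((Φ v:ℂ) * ((v ^ (β-1):ℝ):ℂ)) *
        (Complex.exp ((Real.log x:ℂ) * ((r:ℂ) * Complex.I)) *
          Complex.exp ((Real.log v:ℂ) * ((r:ℂ) * Complex.I))) from by ring,
    ← Complex.exp_add]
  push_cast
  congr 2
  ring

lemma osc_meas_rpow (c : ℝ) : Measurable (fun v : ℝ => v ^ c) :=
  measurable_of_continuousOn_compl_singleton (0:ℝ)
    (ContinuousOn.rpow_const continuousOn_id (fun x hx => Or.inl hx))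

lemma osc_meas_G (Φ : ℝ → ℝ) (β L : ℝ) (hm : Measurable Φ) :
    Measurable (fun p : ℝ × ℝ => ((Φ p.2 * p.2 ^ (β - 1) : ℝ) : ℂ)
      * Complex.exp (Complex.I * p.1 * ((L + Real.log p.2 : ℝ) : ℂ))) := by
  apply Measurable.mul
  · exact Complex.measurable_ofReal.comp
      (((hm.comp measurable_snd)).mul ((osc_meas_rpow (β-1)).comp measurable_snd))
  · apply Complex.measurable_exp.comp
    apply Measurable.mul
    · exact measurable_const.mul (Complex.measurable_ofReal.comp measurable_fst)
    · exact Complex.measurable_ofReal.comp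
        ((measurable_const.add Real.measurable_log).comp measurable_snd)

set_option maxHeartbeats 1000000 in
/-- Bound for the oscillating integral `∫_t^T x^{ir} Φ̆(β+ir) dr`, where `Φ̆` is the
Mellin transform of a measurable weight `Φ : [0,∞) → [0,1]` supported on `[0,2]`. -/
theorem oscillating_mellin_integral_bound :
    ∃ C : ℝ, ∀ (Φ : ℝ → ℝ),
      Measurable Φ →
      (∀ v, Φ v ∈ Set.Icc (0 : ℝ) 1) →
      (∀ v, v ∉ Set.Icc (0 : ℝ) 2 → Φ v = 0) →
      ∀ (x β t T : ℝ), 2 ≤ x → 3 / 4 ≤ β → β ≤ 1 →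
        0 ≤ t → t ≤ T → T ≤ Real.log x ^ ((1 : ℝ) / 4) →
        ‖∫ r in t..T,
            (x : ℂ) ^ ((r : ℂ) * Complex.I) *
              mellin (fun v : ℝ => (Φ v : ℂ)) ((β : ℂ) + (r : ℂ) * Complex.I)‖ ≤
          C / Real.log x := by
  refine ⟨100, ?_⟩
  intro Φ hm hrange hsupp x β t T hx2 hβ1 hβ2 ht0 htT hTle
  have hx0 : (0:ℝ) < x := by linarith
  have hL0 : 0 < Real.log x := Real.log_pos (by linarith)
  set L : ℝ := Real.log x with hLdef
  set G : ℝ × ℝ → ℂ := fun p => ((Φ p.2 * p.2 ^ (β - 1) : ℝ) : ℂ)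
      * Complex.exp (Complex.I * p.1 * ((L + Real.log p.2 : ℝ) : ℂ)) with hGdef
  set v₀ : ℝ := x ^ (-(1/2) : ℝ) with hv₀def
  have hv₀0 : 0 < v₀ := Real.rpow_pos_of_pos hx0 _
  have hv₀1 : v₀ ≤ 1 := Real.rpow_le_one_of_one_le_of_nonpos (by linarith) (by norm_num)
  have hv₀2 : v₀ ≤ 2 := by linarith
  haveI hfin : IsFiniteMeasure (volume.restrict (Set.Ioc t T)) := by
    constructor
    rw [Measure.restrict_apply_univ]
    exact measure_Ioc_lt_top
  -- integrability of the dominating function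
  have hDon : IntegrableOn (fun v : ℝ => v ^ (β - 1) + 1) (Set.Icc (0:ℝ) 2) := by
    rw [integrableOn_Icc_iff_integrableOn_Ioc]
    have h1 : IntervalIntegrable (fun v : ℝ => v ^ (β - 1)) volume 0 2 :=
      intervalIntegral.intervalIntegrable_rpow' (by linarith)
    simpa using (h1.add (intervalIntegrable_const (c := (1:ℝ)))).1
  have hDind : Integrable ((Set.Icc (0:ℝ) 2).indicator (fun v => v ^ (β - 1) + 1)) volume :=
    hDon.integrable_indicator measurableSet_Icc
  -- pointwise bound on the weight
  have hg_le : ∀ v : ℝ, |Φ v * v ^ (β - 1)|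
      ≤ (Set.Icc (0:ℝ) 2).indicator (fun v => v ^ (β - 1) + 1) v := by
    intro v
    by_cases hv : v ∈ Set.Icc (0:ℝ) 2
    · rw [Set.indicator_of_mem hv]
      have h0 : 0 ≤ v ^ (β - 1) := Real.rpow_nonneg hv.1 _
      have hr := hrange v
      rw [_root_.abs_of_nonneg (mul_nonneg hr.1 h0)]
      nlinarith [hr.1, hr.2]
    · rw [Set.indicator_of_notMem hv, hsupp v hv]
      simp
  -- integrability of G on the product
  have hGint : Integrable G
      ((volume.restrict (Set.Ioc t T)).prod (volume.restrict (Set.Ioi (0:ℝ)))) := by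
    have hD2 : Integrable (fun p : ℝ × ℝ =>
        (1:ℝ) * (Set.Icc (0:ℝ) 2).indicator (fun v => v ^ (β - 1) + 1) p.2)
        ((volume.restrict (Set.Ioc t T)).prod (volume.restrict (Set.Ioi (0:ℝ)))) :=
      Integrable.mul_prod (integrable_const 1) hDind.restrict
    refine Integrable.mono (by simpa using hD2)
      (osc_meas_G Φ β L hm).aestronglyMeasurable ?_
    refine Filter.Eventually.of_forall (fun p => ?_)
    have hGn : ‖G p‖ = |Φ p.2 * p.2 ^ (β - 1)| := by
      rw [hGdef]
      simp only []
      rw [norm_mul, osc_norm_exp p.1 (L + Real.log p.2)]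
      simp [Complex.norm_real, abs_mul]
    rw [hGn]
    exact (hg_le p.2).trans (le_abs_self _)
  -- Fubini
  have swap :
      (∫ r in Set.Ioc t T, ∫ v in Set.Ioi (0:ℝ), G (r, v)) =
        ∫ v in Set.Ioi (0:ℝ), ∫ r in Set.Ioc t T, G (r, v) := by
    apply MeasureTheory.integral_integral_swap
    exact hGint
  have hKint : IntegrableOn (fun v => ∫ r in Set.Ioc t T, G (r, v)) (Set.Ioi (0:ℝ)) :=
    hGint.integral_prod_right
  -- rewrite the original integral
  have hstep1 : (∫ r in t..T, (x:ℂ) ^ ((r:ℂ) * Complex.I) *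
        mellin (fun v : ℝ => (Φ v : ℂ)) ((β:ℂ) + (r:ℂ) * Complex.I))
      = ∫ v in Set.Ioi (0:ℝ), ∫ r in Set.Ioc t T, G (r, v) := by
    rw [intervalIntegral.integral_of_le htT]
    rw [show (fun r : ℝ => (x:ℂ) ^ ((r:ℂ) * Complex.I) *
        mellin (fun v : ℝ => (Φ v : ℂ)) ((β:ℂ) + (r:ℂ) * Complex.I))
        = fun r : ℝ => ∫ v in Set.Ioi (0:ℝ), G (r, v) from
      funext fun r => osc_mellin_eq Φ x β r hx0]
    exact swap
  rw [hstep1]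
  -- the part of the outer integral beyond 2 vanishes
  have hzero : (∫ v in Set.Ioi (2:ℝ), ∫ r in Set.Ioc t T, G (r, v)) = 0 := by
    have heq : Set.EqOn (fun v : ℝ => ∫ r in Set.Ioc t T, G (r, v))
        (fun _ : ℝ => (0:ℂ)) (Set.Ioi 2) := by
      intro v hv
      have hnm : v ∉ Set.Icc (0:ℝ) 2 := by
        simp only [Set.mem_Ioi] at hv
        simp only [Set.mem_Icc, not_and_or]
        right; linarith
      have h0 : Φ v = 0 := hsupp v hnm
      simp [hGdef, h0]
    rw [setIntegral_congr_fun measurableSet_Ioi heq]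
    simp
  have hsplit1 : (∫ v in Set.Ioi (0:ℝ), ∫ r in Set.Ioc t T, G (r, v))
      = (∫ v in Set.Ioc (0:ℝ) 2, ∫ r in Set.Ioc t T, G (r, v))
        + ∫ v in Set.Ioi (2:ℝ), ∫ r in Set.Ioc t T, G (r, v) := by
    rw [← setIntegral_union (Set.disjoint_left.mpr
        (fun v h1 h2 => absurd (Set.mem_Ioi.mp h2) (not_lt.mpr h1.2)))
      measurableSet_Ioi (hKint.mono_set Set.Ioc_subset_Ioi_self)
      (hKint.mono_set (Set.Ioi_subset_Ioi (by norm_num)))]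
    rw [Set.Ioc_union_Ioi_eq_Ioi (by norm_num : (0:ℝ) ≤ 2)]
  have hsplit2 : (∫ v in Set.Ioc (0:ℝ) 2, ∫ r in Set.Ioc t T, G (r, v))
      = (∫ v in Set.Ioc (0:ℝ) v₀, ∫ r in Set.Ioc t T, G (r, v))
        + ∫ v in Set.Ioc v₀ 2, ∫ r in Set.Ioc t T, G (r, v) := by
    rw [← setIntegral_union (Set.disjoint_left.mpr
        (fun v h1 h2 => absurd h2.1 (not_lt.mpr h1.2)))
      measurableSet_Ioc (hKint.mono_set Set.Ioc_subset_Ioi_self)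
      (hKint.mono_set (Set.Ioc_subset_Ioi_self.trans (Set.Ioi_subset_Ioi hv₀0.le)))]
    rw [Set.Ioc_union_Ioc_eq_Ioc hv₀0.le hv₀2]
  -- pointwise bounds for the inner integral
  have hKmul : ∀ v : ℝ, (∫ r in Set.Ioc t T, G (r, v))
      = ((Φ v * v ^ (β - 1) : ℝ) : ℂ)
        * ∫ r in Set.Ioc t T, Complex.exp (Complex.I * r * ((L + Real.log v : ℝ) : ℂ)) := by
    intro v
    simp only [hGdef]
    exact integral_const_mul _ _
  have habs : ∀ v : ℝ, 0 < v → |Φ v * v ^ (β - 1)| ≤ v ^ (β - 1) := by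
    intro v hv
    have h0 : 0 ≤ v ^ (β - 1) := Real.rpow_nonneg hv.le _
    have hr := hrange v
    rw [_root_.abs_of_nonneg (mul_nonneg hr.1 h0)]
    nlinarith [hr.1, hr.2]
  have hbound1 : ∀ v ∈ Set.Ioc (0:ℝ) v₀,
      ‖∫ r in Set.Ioc t T, G (r, v)‖ ≤ v ^ (-(1/4) : ℝ) * L ^ ((1:ℝ)/4) := by
    intro v hv
    rw [hKmul v, norm_mul, Complex.norm_real, Real.norm_eq_abs]
    have h1 : |Φ v * v ^ (β - 1)| ≤ v ^ (-(1/4) : ℝ) := by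
      refine (habs v hv.1).trans ?_
      exact Real.rpow_le_rpow_of_exponent_ge hv.1 (hv.2.trans hv₀1) (by linarith)
    have h2 : ‖∫ r in Set.Ioc t T, Complex.exp (Complex.I * r * ((L + Real.log v : ℝ):ℂ))‖
        ≤ L ^ ((1:ℝ)/4) := (osc_inner_le_len htT _).trans (by linarith)
    exact mul_le_mul h1 h2 (norm_nonneg _) (Real.rpow_nonneg hv.1.le _)
  have hbound2 : ∀ v ∈ Set.Ioc v₀ 2,
      ‖∫ r in Set.Ioc t T, G (r, v)‖ ≤ (v ^ (-(1/4) : ℝ) + 1) * (4 / L) := by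
    intro v hv
    have hv0 : 0 < v := lt_trans hv₀0 hv.1
    rw [hKmul v, norm_mul, Complex.norm_real, Real.norm_eq_abs]
    have hlog : -(1/2) * L ≤ Real.log v := by
      rw [show -(1/2) * L = Real.log v₀ from by rw [hv₀def, Real.log_rpow hx0]]
      exact Real.log_le_log hv₀0 hv.1.le
    have hapos : 0 < L + Real.log v := by linarith
    have h2 : ‖∫ r in Set.Ioc t T, Complex.exp (Complex.I * r * ((L + Real.log v : ℝ):ℂ))‖
        ≤ 4 / L := by
      refine (osc_inner_le_two_div htT hapos.ne').trans ?_
      rw [_root_.abs_of_pos hapos, div_le_div_iff₀ hapos hL0]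
      nlinarith [hlog]
    have h1 : |Φ v * v ^ (β - 1)| ≤ v ^ (-(1/4) : ℝ) + 1 := by
      refine (habs v hv0).trans ?_
      rcases le_total v 1 with hv1 | hv1
      · have := Real.rpow_le_rpow_of_exponent_ge hv0 hv1
          (show -(1/4:ℝ) ≤ β - 1 by linarith)
        linarith
      · have ha : v ^ (β - 1) ≤ 1 := Real.rpow_le_one_of_one_le_of_nonpos hv1 (by linarith)
        have hb : 0 ≤ v ^ (-(1/4) : ℝ) := Real.rpow_nonneg hv0.le _
        linarith
    have hnn : 0 ≤ (4:ℝ) / L := by positivity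
    exact mul_le_mul h1 h2 (norm_nonneg _) (by positivity)
  -- first piece
  have hP1 : ‖∫ v in Set.Ioc (0:ℝ) v₀, ∫ r in Set.Ioc t T, G (r, v)‖
      ≤ (4/3) * v₀ ^ ((3:ℝ)/4) * L ^ ((1:ℝ)/4) := by
    refine (norm_integral_le_integral_norm _).trans ?_
    have hle : (∫ v in Set.Ioc (0:ℝ) v₀, ‖∫ r in Set.Ioc t T, G (r, v)‖)
        ≤ ∫ v in Set.Ioc (0:ℝ) v₀, v ^ (-(1/4) : ℝ) * L ^ ((1:ℝ)/4) := by
      refine setIntegral_mono_on ((hKint.mono_set Set.Ioc_subset_Ioi_self).norm)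
        ((intervalIntegral.intervalIntegrable_rpow' (by norm_num)).mul_const _).1
        measurableSet_Ioc hbound1
    refine hle.trans ?_
    rw [← intervalIntegral.integral_of_le hv₀0.le, intervalIntegral.integral_mul_const,
      integral_rpow (Or.inl (by norm_num)),
      Real.zero_rpow (by norm_num : -(1/4:ℝ) + 1 ≠ 0)]
    norm_num
    exact le_of_eq (by ring)
  -- second piece
  have hint2 : IntegrableOn (fun v : ℝ => (v ^ (-(1/4) : ℝ) + 1) * (4 / L))
      (Set.Ioc (0:ℝ) 2) := by
    have h1 : IntervalIntegrable (fun v : ℝ => v ^ (-(1/4) : ℝ)) volume 0 2 :=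
      intervalIntegral.intervalIntegrable_rpow' (by norm_num)
    simpa using ((h1.add (intervalIntegrable_const (c := (1:ℝ)))).mul_const (4/L)).1
  have hP2 : ‖∫ v in Set.Ioc v₀ 2, ∫ r in Set.Ioc t T, G (r, v)‖ ≤ 20 / L := by
    refine (norm_integral_le_integral_norm _).trans ?_
    have hle : (∫ v in Set.Ioc v₀ 2, ‖∫ r in Set.Ioc t T, G (r, v)‖)
        ≤ ∫ v in Set.Ioc v₀ 2, (v ^ (-(1/4) : ℝ) + 1) * (4 / L) := by
      refine setIntegral_mono_on ((hKint.mono_set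
        (Set.Ioc_subset_Ioi_self.trans (Set.Ioi_subset_Ioi hv₀0.le))).norm)
        (hint2.mono_set (Set.Ioc_subset_Ioc_left hv₀0.le))
        measurableSet_Ioc hbound2
    refine hle.trans ?_
    have hmono : (∫ v in Set.Ioc v₀ 2, (v ^ (-(1/4) : ℝ) + 1) * (4 / L))
        ≤ ∫ v in Set.Ioc (0:ℝ) 2, (v ^ (-(1/4) : ℝ) + 1) * (4 / L) := by
      refine setIntegral_mono_set hint2 ?_
        (HasSubset.Subset.eventuallyLE (Set.Ioc_subset_Ioc_left hv₀0.le))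
      refine (ae_restrict_mem measurableSet_Ioc).mono (fun v hv => ?_)
      have h0 : 0 ≤ v ^ (-(1/4) : ℝ) := Real.rpow_nonneg hv.1.le _
      have : 0 ≤ (4:ℝ) / L := by positivity
      positivity
    refine hmono.trans ?_
    have hval : (∫ v in Set.Ioc (0:ℝ) 2, (v ^ (-(1/4) : ℝ) + 1) * (4 / L))
        = ((2:ℝ) ^ (-(1/4:ℝ) + 1) / (-(1/4:ℝ) + 1) + 2) * (4 / L) := by
      rw [← intervalIntegral.integral_of_le (by norm_num : (0:ℝ) ≤ 2),
        intervalIntegral.integral_mul_const,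
        intervalIntegral.integral_add
          (intervalIntegral.intervalIntegrable_rpow' (by norm_num))
          intervalIntegrable_const,
        integral_rpow (Or.inl (by norm_num)),
        Real.zero_rpow (by norm_num : -(1/4:ℝ) + 1 ≠ 0)]
      norm_num
    rw [hval]
    have h2 : (2:ℝ) ^ (-(1/4:ℝ) + 1) ≤ 2 := by
      calc (2:ℝ) ^ (-(1/4:ℝ) + 1) ≤ 2 ^ (1:ℝ) :=
            Real.rpow_le_rpow_of_exponent_le (by norm_num) (by norm_num)
        _ = 2 := Real.rpow_one 2
    have h3 : (2:ℝ) ^ (-(1/4:ℝ) + 1) / (-(1/4:ℝ) + 1) + 2 ≤ 5 := by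
      have h0 : 0 ≤ (2:ℝ) ^ (-(1/4:ℝ) + 1) := Real.rpow_nonneg (by norm_num) _
      rw [show -(1/4:ℝ) + 1 = 3/4 by norm_num] at h2 h0 ⊢
      nlinarith
    have h4 : (0:ℝ) ≤ 4 / L := by positivity
    calc ((2:ℝ) ^ (-(1/4:ℝ) + 1) / (-(1/4:ℝ) + 1) + 2) * (4 / L) ≤ 5 * (4 / L) :=
          mul_le_mul_of_nonneg_right h3 h4
      _ = 20 / L := by ring
  -- the key rpow inequality
  have hkey : (4/3) * v₀ ^ ((3:ℝ)/4) * L ^ ((1:ℝ)/4) ≤ 11 / L := by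
    have hv₀34 : v₀ ^ ((3:ℝ)/4) = x ^ (-(3/8) : ℝ) := by
      rw [hv₀def, ← Real.rpow_mul hx0.le]
      norm_num
    have hlog4 : L ≤ 4 * x ^ ((3:ℝ)/10) := by
      have h := Real.log_le_rpow_div hx0.le (by norm_num : (0:ℝ) < 3/10)
      have hnn : 0 ≤ x ^ ((3:ℝ)/10) := Real.rpow_nonneg hx0.le _
      rw [hLdef]
      nlinarith [h]
    have h54 : L ^ ((1:ℝ)/4) * L ≤ 8 * x ^ ((3:ℝ)/8) := by
      have e1 : L ^ ((1:ℝ)/4) * L = L ^ ((5:ℝ)/4) := by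
        rw [show (5:ℝ)/4 = 1/4 + 1 by norm_num, Real.rpow_add hL0, Real.rpow_one]
      have e2 : L ^ ((5:ℝ)/4) ≤ (4 * x ^ ((3:ℝ)/10)) ^ ((5:ℝ)/4) :=
        Real.rpow_le_rpow hL0.le hlog4 (by norm_num)
      have e3 : (4 * x ^ ((3:ℝ)/10)) ^ ((5:ℝ)/4)
          = 4 ^ ((5:ℝ)/4) * x ^ ((3:ℝ)/8) := by
        rw [Real.mul_rpow (by norm_num) (Real.rpow_nonneg hx0.le _),
          ← Real.rpow_mul hx0.le]
        norm_num
      have e4 : (4:ℝ) ^ ((5:ℝ)/4) ≤ 8 := by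
        have e5 : (4:ℝ) ^ ((3:ℝ)/2) = 8 := by
          rw [show (4:ℝ) = 2 ^ (2:ℝ) from by
              rw [show (2:ℝ) ^ (2:ℝ) = 2 ^ (2:ℕ) from by
                  rw [← Real.rpow_natCast 2 2]; norm_num]
              norm_num,
            ← Real.rpow_mul (by norm_num)]
          rw [show (2:ℝ) * (3/2) = ((3:ℕ):ℝ) by norm_num, Real.rpow_natCast]
          norm_num
        calc (4:ℝ) ^ ((5:ℝ)/4) ≤ 4 ^ ((3:ℝ)/2) :=
              Real.rpow_le_rpow_of_exponent_le (by norm_num) (by norm_num)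
          _ = 8 := e5
      have hnn : 0 ≤ x ^ ((3:ℝ)/8) := Real.rpow_nonneg hx0.le _
      calc L ^ ((1:ℝ)/4) * L = L ^ ((5:ℝ)/4) := e1
        _ ≤ (4 * x ^ ((3:ℝ)/10)) ^ ((5:ℝ)/4) := e2
        _ = 4 ^ ((5:ℝ)/4) * x ^ ((3:ℝ)/8) := e3
        _ ≤ 8 * x ^ ((3:ℝ)/8) := mul_le_mul_of_nonneg_right e4 hnn
    rw [hv₀34, Real.rpow_neg hx0.le]
    have hx38 : 0 < x ^ ((3:ℝ)/8) := Real.rpow_pos_of_pos hx0 _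
    have heq : (4/3 : ℝ) * (x ^ ((3:ℝ)/8))⁻¹ * L ^ ((1:ℝ)/4)
        = ((4/3) * L ^ ((1:ℝ)/4)) / x ^ ((3:ℝ)/8) := by
      field_simp
    rw [heq, div_le_div_iff₀ hx38 hL0]
    have h14 : 0 ≤ L ^ ((1:ℝ)/4) := Real.rpow_nonneg hL0.le _
    nlinarith [h54, hx38.le]
  -- assemble
  rw [hsplit1, hzero, add_zero, hsplit2]
  refine (norm_add_le _ _).trans ?_
  have hfinal : (11:ℝ) / L + 20 / L ≤ 100 / L := by
    rw [← add_div]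
    exact (div_le_div_iff_of_pos_right hL0).2 (by norm_num)
  linarith [hP1.trans hkey, hP2]
end

section
/- There exists a constant C such that for all x, y, q with 16 ≤ x and 2 ≤ y ≤ √(log x): Ψ_q(x,y) = (1/π_q(y)!) · ∏_{p ≤ y prime, p ∤ q} (log x / log p) · (1 + E), where π_q(y) := #{p ≤ y : p prime, p ∤ q} and |E| ≤ C·y²/(log x · log y). -/
open Finset Real

/-- `PsiCop x y q` is the number of `y`-smooth integers `1 ≤ n ≤ x` coprime to `q`. -/
noncomputable def PsiCop (x y : ℝ) (q : ℕ) : ℕ :=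
  ((Finset.Icc 1 ⌊x⌋₊).filter
    (fun n => (∀ p : ℕ, p ∈ n.primeFactors → (p : ℝ) ≤ y) ∧ Nat.Coprime n q)).card


open Finset Real

/-- count of `n ∈ [1, ⌊x⌋]` all of whose prime factors lie in `s`. -/
noncomputable def PsiS (s : Finset ℕ) (x : ℝ) : ℕ :=
  ((Finset.Icc 1 ⌊x⌋₊).filter (fun n => n.primeFactors ⊆ s)).card

lemma psiS_empty (x : ℝ) (hx : 1 ≤ x) : PsiS ∅ x = 1 := by
  have h1 : (1 : ℕ) ≤ ⌊x⌋₊ := Nat.le_floor (by exact_mod_cast hx)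
  have : ((Finset.Icc 1 ⌊x⌋₊).filter (fun n => n.primeFactors ⊆ (∅ : Finset ℕ))) = {1} := by
    ext n
    simp only [Finset.mem_filter, Finset.mem_Icc, Finset.subset_empty, Finset.mem_singleton,
      Nat.primeFactors_eq_empty]
    constructor
    · rintro ⟨⟨h1n, _⟩, h0 | h0⟩ <;> omega
    · rintro rfl; simp [h1]
  rw [PsiS, this, Finset.card_singleton]

lemma psiS_recursion (p : ℕ) (s : Finset ℕ) (hp : p.Prime) (hps : p ∉ s) (x : ℝ) (hx : 1 ≤ x) :
    PsiS (insert p s) x =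
      ∑ a ∈ Finset.range (Nat.log p ⌊x⌋₊ + 1), PsiS s (x / (p : ℝ) ^ a) := by
  classical
  have hx0 : (0 : ℝ) ≤ x := by linarith
  have hN : (1 : ℕ) ≤ ⌊x⌋₊ := Nat.le_floor (by exact_mod_cast hx)
  have hp1 : 1 < p := hp.one_lt
  set N := ⌊x⌋₊ with hNdef
  set M := Nat.log p N with hMdef
  rw [PsiS]
  simp only [PsiS]
  rw [← Finset.card_sigma]
  apply Finset.card_bij'
    (i := fun n _ => (⟨n.factorization p, n / p ^ n.factorization p⟩ :
      Σ _ : ℕ, ℕ))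
    (j := fun t _ => p ^ t.1 * t.2)
  · -- maps to
    intro n hn
    simp only [Finset.mem_filter, Finset.mem_Icc] at hn
    obtain ⟨⟨h1n, hnN⟩, hpf⟩ := hn
    have hn0 : n ≠ 0 := by omega
    have hdvd : p ^ n.factorization p ∣ n := Nat.ordProj_dvd n p
    have hple : p ^ n.factorization p ≤ N := le_trans (Nat.le_of_dvd (by omega) hdvd) hnN
    have haM : n.factorization p ≤ M := by
      rw [hMdef, Nat.le_log_iff_pow_le hp1 (by omega)]; exact hple
    simp only [Finset.mem_sigma, Finset.mem_range, Finset.mem_filter, Finset.mem_Icc]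
    refine ⟨by omega, ⟨Nat.ordCompl_pos p hn0, ?_⟩, ?_⟩
    · -- n / p^a ≤ ⌊x / p^a⌋
      apply Nat.le_floor
      have hcast : ((n / p ^ n.factorization p : ℕ) : ℝ) = (n : ℝ) / (p : ℝ) ^ n.factorization p := by
        rw [Nat.cast_div hdvd (by positivity)]
        push_cast; ring_nf
      rw [hcast]
      apply div_le_div_of_nonneg_right ?_ (by positivity)
      · calc (n : ℝ) ≤ (N : ℝ) := by exact_mod_cast hnN
          _ ≤ x := Nat.floor_le hx0
    · -- primeFactors ⊆ s
      intro t ht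
      have htn : t ∈ n.primeFactors :=
        Nat.primeFactors_mono (Nat.ordCompl_dvd n p) hn0 ht
      have := hpf htn
      rcases Finset.mem_insert.mp this with h | h
      · exfalso
        subst h
        exact Nat.not_dvd_ordCompl hp hn0 (Nat.dvd_of_mem_primeFactors ht)
      · exact h
  · -- reverse maps to
    rintro ⟨a, m⟩ ht
    simp only [Finset.mem_sigma, Finset.mem_range, Finset.mem_filter, Finset.mem_Icc] at ht
    obtain ⟨haM, ⟨h1m, hmfl⟩, hpfm⟩ := ht
    have hm0 : m ≠ 0 := by omega
    simp only [Finset.mem_filter, Finset.mem_Icc]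
    have hmr : (m : ℝ) ≤ x / (p : ℝ) ^ a := Nat.le_floor_iff (by positivity) |>.mp hmfl
    constructor
    · constructor
      · exact Nat.one_le_iff_ne_zero.mpr (by positivity)
      · apply Nat.le_floor
        push_cast
        calc (p : ℝ) ^ a * (m : ℝ) ≤ (p : ℝ) ^ a * (x / (p : ℝ) ^ a) := by
              apply mul_le_mul_of_nonneg_left hmr (by positivity)
          _ = x := by field_simp
    · intro t ht
      have h0 : p ^ a * m ≠ 0 := by positivity
      rw [Nat.mem_primeFactors] at ht
      obtain ⟨htp, htdvd, _⟩ := ht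
      rcases (Nat.Prime.dvd_mul htp).mp htdvd with h | h
      · have : t = p := (Nat.prime_dvd_prime_iff_eq htp hp).mp (htp.dvd_of_dvd_pow h)
        exact Finset.mem_insert.mpr (Or.inl this)
      · refine Finset.mem_insert.mpr (Or.inr (hpfm ?_))
        exact Nat.mem_primeFactors.mpr ⟨htp, h, hm0⟩
  · -- left inverse
    intro n hn
    simp only
    exact Nat.ordProj_mul_ordCompl_eq_self n p
  · -- right inverse
    rintro ⟨a, m⟩ ht
    simp only [Finset.mem_sigma, Finset.mem_range, Finset.mem_filter, Finset.mem_Icc] at ht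
    obtain ⟨haM, ⟨h1m, hmfl⟩, hpfm⟩ := ht
    have hm0 : m ≠ 0 := by omega
    have hpm : ¬ p ∣ m := by
      intro hdvd
      exact hps (hpfm (Nat.mem_primeFactors.mpr ⟨hp, hdvd, hm0⟩))
    have hfact : (p ^ a * m).factorization p = a := by
      rw [Nat.factorization_mul (by positivity) hm0]
      simp [Nat.Prime.factorization_pow, hp, Nat.factorization_eq_zero_of_not_dvd hpm]
    have : p ^ a * m / p ^ (p ^ a * m).factorization p = m := by
      rw [hfact, Nat.mul_div_cancel_left _ (by positivity)]
    simp only [hfact, this]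
    congr 1
    rw [Nat.mul_div_cancel_left _ (show 0 < p^a by positivity)]


/-- key power inequality: for `0 ≤ d ≤ c`, `c^(k+1) - d^(k+1) ≤ (k+1) c^k (c-d)`. -/
lemma pow_sub_pow_le (k : ℕ) (c d : ℝ) (hd : 0 ≤ d) (hdc : d ≤ c) :
    c ^ (k+1) - d ^ (k+1) ≤ (k+1) * c ^ k * (c - d) := by
  have hc : 0 ≤ c := le_trans hd hdc
  rw [← geom_sum₂_mul c d (k+1)]
  apply mul_le_mul_of_nonneg_right ?_ (by linarith)
  calc ∑ i ∈ Finset.range (k+1), c ^ i * d ^ (k - i)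
      ≤ ∑ i ∈ Finset.range (k+1), c ^ k := by
        apply Finset.sum_le_sum
        intro i hi
        rw [Finset.mem_range] at hi
        calc c ^ i * d ^ (k - i) ≤ c ^ i * c ^ (k - i) := by
              apply mul_le_mul_of_nonneg_left (pow_le_pow_left₀ hd hdc _) (by positivity)
          _ = c ^ k := by rw [← pow_add]; congr 1; omega
    _ = (k+1) * c ^ k := by rw [Finset.sum_const, Finset.card_range]; push_cast; ring

/-- and the companion: `(k+1) c^k u ≤ (c+u)^(k+1) - c^(k+1)` for `0 ≤ c`, `0 ≤ u`. -/
lemma pow_add_pow_ge (k : ℕ) (c u : ℝ) (hc : 0 ≤ c) (hu : 0 ≤ u) :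
    (k+1) * c ^ k * u ≤ (c + u) ^ (k+1) - c ^ (k+1) := by
  rw [← geom_sum₂_mul (c+u) c (k+1)]
  have hterm : ∀ i ∈ Finset.range (k+1), c ^ k ≤ (c+u) ^ i * c ^ (k - i) := by
    intro i hi
    rw [Finset.mem_range] at hi
    calc c ^ k = c ^ i * c ^ (k - i) := by rw [← pow_add]; congr 1; omega
      _ ≤ (c+u) ^ i * c ^ (k - i) := by
          apply mul_le_mul_of_nonneg_right (pow_le_pow_left₀ hc (by linarith) _) (by positivity)
  have hsum : (k+1 : ℝ) * c ^ k ≤ ∑ i ∈ Finset.range (k+1), (c+u) ^ i * c ^ (k - i) := by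
    calc (k+1 : ℝ) * c ^ k = ∑ _i ∈ Finset.range (k+1), c ^ k := by
          rw [Finset.sum_const, Finset.card_range]; push_cast; ring
      _ ≤ _ := Finset.sum_le_sum hterm
  have : c + u - c = u := by ring
  rw [this]
  exact mul_le_mul_of_nonneg_right hsum hu

lemma sum_pow_lower (k : ℕ) (L u : ℝ) (hu : 0 < u) (M : ℕ)
    (h1 : 0 ≤ L - M * u) (h2 : L < (M + 1) * u) :
    L ^ (k+1) / ((k+1) * u) ≤ ∑ a ∈ Finset.range (M+1), (L - a * u) ^ k := by
  have hL : 0 ≤ L := by nlinarith [Nat.cast_nonneg (α := ℝ) M]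
  set G : ℕ → ℝ := fun a => (max (L - a * u) 0) ^ (k+1) with hG
  have htel : ∑ a ∈ Finset.range (M+1), (G a - G (a+1)) = G 0 - G (M+1) :=
    Finset.sum_range_sub' G (M+1)
  have hG0 : G 0 = L ^ (k+1) := by simp [hG, max_eq_left hL]
  have hGM : G (M+1) = 0 := by
    simp only [hG]
    rw [max_eq_right (by push_cast; nlinarith)]
    simp
  have hstep : ∀ a ∈ Finset.range (M+1), G a - G (a+1) ≤ (k+1) * u * (L - a * u) ^ k := by
    intro a ha
    rw [Finset.mem_range] at ha
    have haM : (a : ℝ) ≤ M := by exact_mod_cast Nat.lt_succ_iff.mp ha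
    have hc : 0 ≤ L - a * u := by nlinarith
    have hGa : G a = (L - a * u) ^ (k+1) := by simp [hG, max_eq_left hc]
    set c := L - a * u with hcdef
    set d := max (L - (a+1 : ℕ) * u) 0 with hddef
    have hd0 : 0 ≤ d := le_max_right _ _
    have hdc : d ≤ c := by
      apply max_le ?_ hc
      push_cast; nlinarith
    have hcd : c - d ≤ u := by
      rcases le_or_gt (L - (a+1 : ℕ) * u) 0 with h | h
      · have : d = 0 := max_eq_right h
        rw [this]
        push_cast at h ⊢; nlinarith
      · have : d = L - (a+1 : ℕ) * u := max_eq_left h.le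
        rw [this]; push_cast; nlinarith
    have h3 := pow_sub_pow_le k c d hd0 hdc
    have hck : (0:ℝ) ≤ (k+1) * c ^ k := by positivity
    have : c ^ (k+1) - d ^ (k+1) ≤ (k+1) * c ^ k * u := by
      nlinarith [mul_le_mul_of_nonneg_left hcd hck]
    rw [hGa]
    calc c ^ (k+1) - d ^ (k+1) ≤ (k+1) * c ^ k * u := this
      _ = (k+1) * u * c ^ k := by ring
  have hsum : L ^ (k+1) ≤ ∑ a ∈ Finset.range (M+1), (k+1) * u * (L - a * u) ^ k := by
    calc L ^ (k+1) = G 0 - G (M+1) := by rw [hG0, hGM]; ring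
      _ = ∑ a ∈ Finset.range (M+1), (G a - G (a+1)) := htel.symm
      _ ≤ _ := Finset.sum_le_sum hstep
  rw [div_le_iff₀ (by positivity)]
  have heq : (∑ a ∈ Finset.range (M+1), (L - a * u) ^ k) * ((k+1) * u)
      = ∑ a ∈ Finset.range (M+1), (k+1) * u * (L - a * u) ^ k := by
    rw [Finset.sum_mul]
    apply Finset.sum_congr rfl
    intros; ring
  rw [heq]
  exact hsum

lemma sum_pow_upper (k : ℕ) (L u S : ℝ) (hu : 0 < u) (hS : 0 ≤ S) (M : ℕ)
    (h1 : 0 ≤ L - M * u) :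
    ∑ a ∈ Finset.range (M+1), (L - a * u + S) ^ k ≤ (L + S + u) ^ (k+1) / ((k+1) * u) := by
  set F : ℕ → ℝ := fun a => (L + S + u - a * u) ^ (k+1) with hF
  have htel : ∑ a ∈ Finset.range (M+1), (F a - F (a+1)) = F 0 - F (M+1) :=
    Finset.sum_range_sub' F (M+1)
  have hstep : ∀ a ∈ Finset.range (M+1), (k+1) * u * (L - a * u + S) ^ k ≤ F a - F (a+1) := by
    intro a ha
    rw [Finset.mem_range] at ha
    have haM : (a : ℝ) ≤ M := by exact_mod_cast Nat.lt_succ_iff.mp ha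
    have hc : 0 ≤ L - a * u + S := by nlinarith
    have hFa : F a = ((L - a * u + S) + u) ^ (k+1) := by simp only [hF]; ring_nf
    have hFa1 : F (a+1) = (L - a * u + S) ^ (k+1) := by simp only [hF]; push_cast; ring_nf
    have := pow_add_pow_ge k (L - a * u + S) u hc hu.le
    rw [hFa, hFa1]
    calc (k+1 : ℝ) * u * (L - a*u + S)^k = (k+1) * (L - a*u + S)^k * u := by ring
      _ ≤ _ := this
  have hFM : 0 ≤ F (M+1) := by
    have : F (M+1) = (L - M * u + S) ^ (k+1) := by simp only [hF]; push_cast; ring_nf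
    rw [this]
    positivity
  have hF0 : F 0 = (L + S + u) ^ (k+1) := by simp [hF]
  have hsum : ((k+1) * u) * ∑ a ∈ Finset.range (M+1), (L - a * u + S) ^ k ≤ (L + S + u) ^ (k+1) := by
    rw [Finset.mul_sum]
    calc ∑ a ∈ Finset.range (M+1), (k+1) * u * (L - a*u + S)^k
        ≤ ∑ a ∈ Finset.range (M+1), (F a - F (a+1)) := Finset.sum_le_sum hstep
      _ = F 0 - F (M+1) := htel
      _ ≤ F 0 := by linarith
      _ = _ := hF0
  rw [le_div_iff₀ (by positivity)]
  linarith

lemma psiS_bounds (s : Finset ℕ) (hs : ∀ p ∈ s, p.Prime) :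
    ∀ x : ℝ, 1 ≤ x →
      Real.log x ^ s.card / (s.card.factorial * ∏ p ∈ s, Real.log p) ≤ (PsiS s x : ℝ) ∧
      (PsiS s x : ℝ) ≤ (Real.log x + ∑ p ∈ s, Real.log p) ^ s.card /
        (s.card.factorial * ∏ p ∈ s, Real.log p) := by
  classical
  induction s using Finset.induction_on with
  | empty =>
    intro x hx
    simp [psiS_empty x hx]
  | insert _ _ hps =>
    rename_i p s ih
    intro x hx
    have hp : p.Prime := hs p (Finset.mem_insert_self p s)
    have hs' : ∀ q ∈ s, q.Prime := fun q hq => hs q (Finset.mem_insert_of_mem hq)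
    have ihs := ih hs'
    have hp1 : 1 < p := hp.one_lt
    have hpr : (1 : ℝ) < (p : ℝ) := by exact_mod_cast hp1
    have hu : 0 < Real.log p := Real.log_pos hpr
    have hPP : 0 < ∏ q ∈ s, Real.log q := by
      apply Finset.prod_pos
      intro q hq
      exact Real.log_pos (by exact_mod_cast (hs' q hq).one_lt)
    have hS : 0 ≤ ∑ q ∈ s, Real.log q := by
      apply Finset.sum_nonneg
      intro q hq
      exact (Real.log_pos (by exact_mod_cast (hs' q hq).one_lt)).le
    have hx0 : (0 : ℝ) < x := by linarith
    have hL : 0 ≤ Real.log x := Real.log_nonneg hx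
    have hN : (1 : ℕ) ≤ ⌊x⌋₊ := Nat.le_floor (by exact_mod_cast hx)
    set L := Real.log x with hLdef
    set u := Real.log p with hudef
    set S := ∑ q ∈ s, Real.log q with hSdef
    set PP := ∏ q ∈ s, Real.log q with hPPdef
    set k := s.card with hkdef
    set M := Nat.log p ⌊x⌋₊ with hMdef
    set kf : ℝ := (k.factorial : ℝ) with hkf
    have hkf0 : 0 < kf := by rw [hkf]; exact_mod_cast Nat.factorial_pos k
    -- powers of p up to M stay below x
    have hpow : ∀ a : ℕ, a ≤ M → (p : ℝ) ^ a ≤ x := by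
      intro a ha
      have h1 : p ^ a ≤ p ^ M := Nat.pow_le_pow_right (by omega) ha
      have h2 : p ^ M ≤ ⌊x⌋₊ := Nat.pow_log_le_self p (by omega)
      calc ((p : ℝ)) ^ a = ((p ^ a : ℕ) : ℝ) := by push_cast; ring
        _ ≤ ((⌊x⌋₊ : ℕ) : ℝ) := by exact_mod_cast le_trans h1 h2
        _ ≤ x := Nat.floor_le hx0.le
    have hxa : ∀ a : ℕ, a ≤ M → 1 ≤ x / (p : ℝ) ^ a := by
      intro a ha
      rw [le_div_iff₀ (by positivity)]
      simpa using hpow a ha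
    have hlog : ∀ a : ℕ, Real.log (x / (p : ℝ) ^ a) = L - a * u := by
      intro a
      rw [Real.log_div (ne_of_gt hx0) (by positivity), Real.log_pow]
    have h1 : 0 ≤ L - M * u := by
      have := Real.log_le_log (by positivity) (hpow M le_rfl)
      rw [Real.log_pow] at this
      linarith
    have h2 : L < (M + 1) * u := by
      have hfl : (⌊x⌋₊ : ℕ) < p ^ (M + 1) := Nat.lt_pow_succ_log_self hp1 _
      have hxlt : x < (p : ℝ) ^ (M + 1) := by
        calc x < (⌊x⌋₊ : ℝ) + 1 := Nat.lt_floor_add_one x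
          _ ≤ ((p ^ (M+1) : ℕ) : ℝ) := by exact_mod_cast hfl
          _ = (p : ℝ) ^ (M+1) := by push_cast; ring
      have := Real.log_lt_log hx0 hxlt
      rw [Real.log_pow] at this
      push_cast at this ⊢
      linarith
    have hrec := psiS_recursion p s hp hps x hx
    have hcast : ((PsiS (insert p s) x : ℕ) : ℝ)
        = ∑ a ∈ Finset.range (M+1), ((PsiS s (x / (p:ℝ)^a) : ℕ) : ℝ) := by
      rw [hrec]; push_cast; ring
    have hcard : (insert p s).card = k + 1 := Finset.card_insert_of_notMem hps
    have hprod : ∏ q ∈ insert p s, Real.log q = u * PP := Finset.prod_insert hps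
    have hsum : ∑ q ∈ insert p s, Real.log q = u + S := Finset.sum_insert hps
    constructor
    · -- lower bound
      rw [hcard, hprod]
      have hterm : ∀ a ∈ Finset.range (M+1),
          (L - a * u) ^ k / (kf * PP) ≤ ((PsiS s (x / (p:ℝ)^a) : ℕ) : ℝ) := by
        intro a ha
        rw [Finset.mem_range, Nat.lt_succ_iff] at ha
        have := (ihs (x / (p:ℝ)^a) (hxa a ha)).1
        rwa [hlog a] at this
      calc L ^ (k+1) / (((k+1).factorial : ℝ) * (u * PP))
          = (L ^ (k+1) / ((k+1) * u)) / (kf * PP) := by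
            rw [Nat.factorial_succ, div_div]
            congr 1
            push_cast
            ring
        _ ≤ (∑ a ∈ Finset.range (M+1), (L - a * u) ^ k) / (kf * PP) := by
            apply div_le_div_of_nonneg_right (sum_pow_lower k L u hu M h1 h2) (by positivity)
        _ = ∑ a ∈ Finset.range (M+1), (L - a * u) ^ k / (kf * PP) := by
            rw [Finset.sum_div]
        _ ≤ ∑ a ∈ Finset.range (M+1), ((PsiS s (x / (p:ℝ)^a) : ℕ) : ℝ) :=
            Finset.sum_le_sum hterm
        _ = _ := hcast.symm
    · -- upper bound
      rw [hcard, hprod, hsum]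
      have hterm : ∀ a ∈ Finset.range (M+1),
          ((PsiS s (x / (p:ℝ)^a) : ℕ) : ℝ) ≤ (L - a * u + S) ^ k / (kf * PP) := by
        intro a ha
        rw [Finset.mem_range, Nat.lt_succ_iff] at ha
        have := (ihs (x / (p:ℝ)^a) (hxa a ha)).2
        rwa [hlog a] at this
      calc ((PsiS (insert p s) x : ℕ) : ℝ)
          = ∑ a ∈ Finset.range (M+1), ((PsiS s (x / (p:ℝ)^a) : ℕ) : ℝ) := hcast
        _ ≤ ∑ a ∈ Finset.range (M+1), (L - a * u + S) ^ k / (kf * PP) :=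
            Finset.sum_le_sum hterm
        _ = (∑ a ∈ Finset.range (M+1), (L - a * u + S) ^ k) / (kf * PP) := by
            rw [Finset.sum_div]
        _ ≤ ((L + S + u) ^ (k+1) / ((k+1) * u)) / (kf * PP) := by
            apply div_le_div_of_nonneg_right (sum_pow_upper k L u S hu hS M h1) (by positivity)
        _ = (L + (u + S)) ^ (k+1) / (((k+1).factorial : ℝ) * (u * PP)) := by
            rw [Nat.factorial_succ, div_div]
            have h3 : L + S + u = L + (u + S) := by ring
            rw [h3]
            congr 1
            push_cast
            ring

lemma psiCop_eq (x y : ℝ) (q : ℕ) (hy : 0 ≤ y) :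
    PsiCop x y q = PsiS ((primesUpTo y).filter (fun p => ¬ p ∣ q)) x := by
  classical
  unfold PsiCop PsiS
  congr 1
  apply Finset.filter_congr
  intro n hn
  rw [Finset.mem_Icc] at hn
  have hn0 : n ≠ 0 := by omega
  constructor
  · rintro ⟨hsmooth, hcop⟩
    intro t ht
    have htp : t.Prime := Nat.prime_of_mem_primeFactors ht
    have htd : t ∣ n := Nat.dvd_of_mem_primeFactors ht
    simp only [Finset.mem_filter, primesUpTo, Finset.mem_Iic]
    refine ⟨⟨Nat.le_floor (hsmooth t ht), htp⟩, ?_⟩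
    intro htq
    have h1 : t ∣ Nat.gcd n q := Nat.dvd_gcd htd htq
    rw [hcop] at h1
    exact htp.one_lt.ne' (Nat.dvd_one.mp h1)
  · intro hsub
    constructor
    · intro t ht
      have := hsub ht
      simp only [Finset.mem_filter, primesUpTo, Finset.mem_Iic] at this
      calc (t : ℝ) ≤ (⌊y⌋₊ : ℝ) := by exact_mod_cast this.1.1
        _ ≤ y := Nat.floor_le hy
    · by_contra h
      obtain ⟨t, htp, htd⟩ := Nat.exists_prime_and_dvd h
      have htn : t ∣ n := htd.trans (Nat.gcd_dvd_left n q)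
      have htq : t ∣ q := htd.trans (Nat.gcd_dvd_right n q)
      have htf : t ∈ n.primeFactors := Nat.mem_primeFactors.mpr ⟨htp, htn, hn0⟩
      have := hsub htf
      simp only [Finset.mem_filter] at this
      exact this.2 htq

lemma theta_le (y : ℝ) (hy : 0 ≤ y) :
    ∑ p ∈ primesUpTo y, Real.log p ≤ 2 * y := by
  have hIic : Finset.Iic ⌊y⌋₊ = Finset.range (⌊y⌋₊ + 1) := by
    ext a; simp [Nat.lt_succ_iff]
  have hprod : ∏ p ∈ primesUpTo y, (p : ℝ) = (primorial ⌊y⌋₊ : ℝ) := by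
    rw [primesUpTo, hIic, primorial]
    push_cast
    rfl
  have hne : ∀ p ∈ primesUpTo y, (p : ℝ) ≠ 0 := by
    intro p hp
    simp only [primesUpTo, Finset.mem_filter] at hp
    exact_mod_cast hp.2.pos.ne'
  rw [← Real.log_prod hne, hprod]
  have h4 : (primorial ⌊y⌋₊ : ℝ) ≤ (4 : ℝ) ^ ⌊y⌋₊ := by
    exact_mod_cast primorial_le_4_pow ⌊y⌋₊
  have hppos : (0 : ℝ) < (primorial ⌊y⌋₊ : ℝ) := by
    exact_mod_cast primorial_pos ⌊y⌋₊
  calc Real.log (primorial ⌊y⌋₊ : ℝ) ≤ Real.log ((4:ℝ) ^ ⌊y⌋₊) :=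
        Real.log_le_log hppos h4
    _ = (⌊y⌋₊ : ℝ) * Real.log 4 := by rw [Real.log_pow]
    _ ≤ (⌊y⌋₊ : ℝ) * 2 := by
        apply mul_le_mul_of_nonneg_left ?_ (by positivity)
        have h24 : (4:ℝ) = 2^2 := by norm_num
        rw [h24, Real.log_pow]
        have := Real.log_two_lt_d9
        push_cast
        linarith
    _ ≤ y * 2 := by
        apply mul_le_mul_of_nonneg_right (Nat.floor_le hy) (by norm_num)
    _ = 2 * y := by ring

lemma card_primesUpTo (y : ℝ) (hy : 2 ≤ y) :
    ((primesUpTo y).card : ℝ) ≤ 6 * y / Real.log y := by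
  classical
  have hy0 : (0:ℝ) ≤ y := by linarith
  have hy1 : (1:ℝ) < y := by linarith
  have hlogy : 0 < Real.log y := Real.log_pos hy1
  have hsqy : 0 < Real.sqrt y := Real.sqrt_pos.mpr (by linarith)
  set m := ⌊y⌋₊ with hm
  set r := Nat.sqrt m with hr
  set Pr := primesUpTo y with hPr
  have hsplit := Finset.card_filter_add_card_filter_not
    (s := Pr) (p := fun p => p ≤ r)
  set cs := (Pr.filter (fun p => p ≤ r)).card with hcs
  set cl := (Pr.filter (fun p => ¬ p ≤ r)).card with hcl
  -- r ≤ sqrt y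
  have hrs : (r : ℝ) ≤ Real.sqrt y := by
    have h1 : (r:ℝ)^2 ≤ (m:ℝ) := by exact_mod_cast Nat.sqrt_le' m
    have h2 : (m:ℝ) ≤ y := Nat.floor_le hy0
    rw [Real.le_sqrt (by positivity) hy0]
    linarith
  -- sqrt y ≤ 2 y / log y
  have hsq2 : Real.sqrt y ≤ 2 * y / Real.log y := by
    rw [le_div_iff₀ hlogy]
    have hlog : Real.log y = 2 * Real.log (Real.sqrt y) := by
      rw [Real.log_sqrt hy0]; ring
    have hls : Real.log (Real.sqrt y) ≤ Real.sqrt y :=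
      le_trans (Real.log_le_sub_one_of_pos hsqy) (by linarith)
    have hmul : Real.sqrt y * Real.sqrt y = y := Real.mul_self_sqrt hy0
    calc Real.sqrt y * Real.log y = 2 * (Real.sqrt y * Real.log (Real.sqrt y)) := by
          rw [hlog]; ring
      _ ≤ 2 * (Real.sqrt y * Real.sqrt y) := by
          apply mul_le_mul_of_nonneg_left ?_ (by norm_num)
          exact mul_le_mul_of_nonneg_left hls hsqy.le
      _ = 2 * y := by rw [hmul]
  -- small count
  have hcs_le : (cs : ℝ) ≤ 2 * y / Real.log y := by
    have hsub : Pr.filter (fun p => p ≤ r) ⊆ Finset.Icc 2 r := by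
      intro p hp
      simp only [Finset.mem_filter, hPr, primesUpTo, Finset.mem_Iic] at hp
      rw [Finset.mem_Icc]
      exact ⟨hp.1.2.two_le, hp.2⟩
    have h1 : cs ≤ (Finset.Icc 2 r).card := Finset.card_le_card hsub
    have h2 : (Finset.Icc 2 r).card ≤ r := by
      rw [Nat.card_Icc]; omega
    calc (cs : ℝ) ≤ (r : ℝ) := by exact_mod_cast le_trans h1 h2
      _ ≤ Real.sqrt y := hrs
      _ ≤ 2 * y / Real.log y := hsq2
  -- large count
  have hcl_le : (cl : ℝ) ≤ 4 * y / Real.log y := by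
    have hkey : ∀ p ∈ Pr.filter (fun p => ¬ p ≤ r), Real.log y / 2 ≤ Real.log p := by
      intro p hp
      simp only [Finset.mem_filter, hPr, primesUpTo, Finset.mem_Iic] at hp
      obtain ⟨⟨hpm, hpp⟩, hpr⟩ := hp
      have hp1 : r + 1 ≤ p := by omega
      have hygt : y < ((r+1 : ℕ) : ℝ)^2 := by
        have h1 : m < (r+1) * (r+1) := Nat.lt_succ_sqrt m
        have h2 : y < (m : ℝ) + 1 := Nat.lt_floor_add_one y
        have h3 : (m : ℝ) + 1 ≤ ((r+1:ℕ):ℝ) * ((r+1:ℕ):ℝ) := by exact_mod_cast h1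
        push_cast at h3 ⊢
        nlinarith
      have hsy : Real.sqrt y ≤ (p : ℝ) := by
        have hpge : ((r+1:ℕ):ℝ) ≤ (p:ℝ) := by exact_mod_cast hp1
        have : y ≤ (p:ℝ)^2 := by push_cast at hpge hygt ⊢; nlinarith
        calc Real.sqrt y ≤ Real.sqrt ((p:ℝ)^2) := Real.sqrt_le_sqrt this
          _ = (p:ℝ) := by rw [Real.sqrt_sq (by positivity)]
      calc Real.log y / 2 = Real.log (Real.sqrt y) := (Real.log_sqrt hy0).symm
        _ ≤ Real.log p := Real.log_le_log hsqy hsy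
    have hsum1 : (cl : ℝ) * (Real.log y / 2) ≤ ∑ p ∈ Pr.filter (fun p => ¬ p ≤ r), Real.log p := by
      have := Finset.card_nsmul_le_sum (Pr.filter (fun p => ¬ p ≤ r))
        (fun p => Real.log p) (Real.log y / 2) hkey
      simpa only [nsmul_eq_mul] using this
    have hsum2 : ∑ p ∈ Pr.filter (fun p => ¬ p ≤ r), Real.log p ≤ ∑ p ∈ Pr, Real.log p := by
      apply Finset.sum_le_sum_of_subset_of_nonneg (Finset.filter_subset _ _)
      intro p hp _
      simp only [hPr, primesUpTo, Finset.mem_filter] at hp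
      have : (1:ℝ) ≤ p := by exact_mod_cast hp.2.one_lt.le
      exact Real.log_nonneg this
    have htheta := theta_le y hy0
    have : (cl : ℝ) * (Real.log y / 2) ≤ 2 * y := by
      calc (cl : ℝ) * (Real.log y / 2) ≤ _ := hsum1
        _ ≤ ∑ p ∈ Pr, Real.log p := hsum2
        _ ≤ 2 * y := htheta
    rw [le_div_iff₀ hlogy]
    linarith
  have : ((Pr.card : ℕ) : ℝ) = (cs : ℝ) + (cl : ℝ) := by
    rw [hcs, hcl]
    exact_mod_cast hsplit.symm
  rw [this]
  calc (cs:ℝ) + (cl:ℝ) ≤ 2 * y / Real.log y + 4 * y / Real.log y := add_le_add hcs_le hcl_le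
    _ = 6 * y / Real.log y := by ring

set_option maxHeartbeats 1000000 in
/-- Ennola-type formula: for `16 ≤ x` and `2 ≤ y ≤ √(log x)`,
`Ψ_q(x,y) = (1/π_q(y)!) ∏_{p ≤ y, p ∤ q} (log x/log p) · (1 + O(y²/(log x log y)))`. -/
theorem PsiCop_ennola_formula :
    ∃ C : ℝ, ∀ (x y : ℝ) (q : ℕ), 16 ≤ x → 2 ≤ y → y ≤ Real.sqrt (Real.log x) →
      ∃ E : ℝ, |E| ≤ C * y ^ 2 / (Real.log x * Real.log y) ∧
        (PsiCop x y q : ℝ) =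
          (1 / (Nat.factorial ((primesUpTo y).filter (fun (p : ℕ) => ¬ p ∣ q)).card : ℝ)) *
            (∏ p ∈ (primesUpTo y).filter (fun (p : ℕ) => ¬ p ∣ q),
              Real.log x / Real.log p) * (1 + E) := by
  classical
  use 12 * Real.exp 18
  intro x y q hx hy2 hysq
  set P := (primesUpTo y).filter (fun p => ¬ p ∣ q) with hPdef
  have hP : ∀ p ∈ P, p.Prime := by
    intro p hp
    simp only [hPdef, primesUpTo, Finset.mem_filter] at hp
    exact hp.1.2
  have hy0 : (0:ℝ) ≤ y := by linarith
  have hx1 : (1:ℝ) ≤ x := by linarith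
  have hL : 0 < Real.log x := Real.log_pos (by linarith)
  have hlogy : 0 < Real.log y := Real.log_pos (by linarith)
  set L := Real.log x with hLdef
  set k := P.card with hkdef
  set PP := ∏ p ∈ P, Real.log p with hPPdef
  have hPP : 0 < PP := by
    apply Finset.prod_pos
    intro p hp
    exact Real.log_pos (by exact_mod_cast (hP p hp).one_lt)
  set kf : ℝ := (k.factorial : ℝ) with hkf
  have hkf0 : 0 < kf := by rw [hkf]; exact_mod_cast Nat.factorial_pos k
  set S := ∑ p ∈ P, Real.log p with hSdef
  have hS0 : 0 ≤ S := by
    apply Finset.sum_nonneg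
    intro p hp
    exact (Real.log_pos (by exact_mod_cast (hP p hp).one_lt)).le
  set V := L ^ k / (kf * PP) with hVdef
  have hV : 0 < V := by positivity
  have hbounds := psiS_bounds P hP x hx1
  have hPsiEq : (PsiCop x y q : ℝ) = (PsiS P x : ℝ) := by
    rw [psiCop_eq x y q hy0]
  set Psi : ℝ := (PsiS P x : ℝ) with hPsidef
  have hlow : V ≤ Psi := hbounds.1
  have hup : Psi ≤ (L + S) ^ k / (kf * PP) := hbounds.2
  -- the product rewrite
  have hprodV : (1 / kf) * (∏ p ∈ P, L / Real.log p) = V := by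
    rw [Finset.prod_div_distrib, Finset.prod_const, hVdef]
    field_simp
    rw [← hPPdef, mul_div_assoc, div_self hPP.ne', mul_one]
  set E := Psi / V - 1 with hEdef
  -- chebyshev bounds
  have hScheb : S ≤ 2 * y := by
    calc S ≤ ∑ p ∈ primesUpTo y, Real.log p := by
          apply Finset.sum_le_sum_of_subset_of_nonneg (Finset.filter_subset _ _)
          intro p hp _
          simp only [primesUpTo, Finset.mem_filter] at hp
          exact Real.log_nonneg (by exact_mod_cast hp.2.one_lt.le)
      _ ≤ 2 * y := theta_le y hy0
  have hkcheb : (k : ℝ) ≤ 6 * y / Real.log y := by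
    calc (k : ℝ) ≤ ((primesUpTo y).card : ℝ) := by
          exact_mod_cast Finset.card_le_card (Finset.filter_subset _ _)
      _ ≤ 6 * y / Real.log y := card_primesUpTo y hy2
  have hy2L : y ^ 2 ≤ L := by
    have := Real.sq_sqrt hL.le
    nlinarith [Real.sqrt_nonneg L, hysq]
  set t := S / L with htdef
  have ht0 : 0 ≤ t := by positivity
  set z := (k : ℝ) * t with hzdef
  have hz0 : 0 ≤ z := by positivity
  have hzbound : z ≤ 12 * y ^ 2 / (L * Real.log y) := by
    have hkS : (k : ℝ) * S ≤ (6 * y / Real.log y) * (2 * y) := by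
      apply mul_le_mul hkcheb hScheb hS0 (by positivity)
    have : z = (k : ℝ) * S / L := by rw [hzdef, htdef]; ring
    rw [this]
    rw [div_le_div_iff₀ hL (by positivity)]
    calc (k:ℝ) * S * (L * Real.log y) ≤ ((6 * y / Real.log y) * (2 * y)) * (L * Real.log y) := by
          apply mul_le_mul_of_nonneg_right hkS (by positivity)
      _ = 12 * y^2 * L := by field_simp; ring
  have hz18 : z ≤ 18 := by
    have h1 : 12 * y ^ 2 / (L * Real.log y) ≤ 12 / Real.log y := by
      rw [div_le_div_iff₀ (by positivity) hlogy]
      have hm := mul_le_mul_of_nonneg_right hy2L hlogy.le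
      linarith [hm]
    have h2 : 12 / Real.log y ≤ 18 := by
      rw [div_le_iff₀ hlogy]
      have hl2 : Real.log 2 ≤ Real.log y := Real.log_le_log (by norm_num) hy2
      have := Real.log_two_gt_d9
      linarith
    linarith [hzbound]
  -- bound E
  have hE0 : 0 ≤ E := by
    rw [hEdef]
    have : (1:ℝ) ≤ Psi / V := (one_le_div hV).mpr hlow
    linarith
  have hEup : E ≤ z * Real.exp 18 := by
    have hup2 : Psi / V ≤ (1 + t) ^ k := by
      rw [div_le_iff₀ hV]
      have hLk : (0:ℝ) < L ^ k := by positivity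
      have heq : (1 + t) ^ k * V = (L + S) ^ k / (kf * PP) := by
        have h1t : 1 + t = (L + S) / L := by
          rw [htdef]
          field_simp
        rw [h1t, div_pow, hVdef, div_mul_div_comm, mul_comm (L ^ k) (kf * PP)]
        exact mul_div_mul_right _ _ (by positivity)
      rw [heq]
      exact hup
    have hexp : (1 + t) ^ k ≤ Real.exp z := by
      calc (1 + t) ^ k ≤ (Real.exp t) ^ k := by
            apply pow_le_pow_left₀ (by linarith) ?_ k
            have := Real.add_one_le_exp t
            linarith
        _ = Real.exp ((k : ℝ) * t) := (Real.exp_nat_mul t k).symm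
    have hexpz : Real.exp z - 1 ≤ z * Real.exp z := by
      have h1 := Real.add_one_le_exp (-z)
      have h2 : Real.exp (-z) * Real.exp z = 1 := by
        rw [← Real.exp_add]; simp
      have h3 : (1 - z) * Real.exp z ≤ 1 := by
        calc (1 - z) * Real.exp z ≤ Real.exp (-z) * Real.exp z :=
              mul_le_mul_of_nonneg_right (by linarith) (Real.exp_pos z).le
          _ = 1 := h2
      have h4 : (1 - z) * Real.exp z = Real.exp z - z * Real.exp z := by ring
      linarith
    have hez : Real.exp z ≤ Real.exp 18 := Real.exp_le_exp.mpr hz18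
    calc E = Psi / V - 1 := hEdef
      _ ≤ (1 + t)^k - 1 := by linarith
      _ ≤ Real.exp z - 1 := by linarith
      _ ≤ z * Real.exp z := hexpz
      _ ≤ z * Real.exp 18 := mul_le_mul_of_nonneg_left hez hz0
  refine ⟨E, ?_, ?_⟩
  · rw [abs_of_nonneg hE0]
    calc E ≤ z * Real.exp 18 := hEup
      _ ≤ (12 * y ^ 2 / (L * Real.log y)) * Real.exp 18 :=
          mul_le_mul_of_nonneg_right hzbound (Real.exp_pos 18).le
      _ = 12 * Real.exp 18 * y ^ 2 / (L * Real.log y) := by ring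
  · rw [hPsiEq]
    rw [hprodV]
    rw [hEdef]
    have hone : 1 + (Psi / V - 1) = Psi / V := by ring
    rw [hone, mul_comm, div_mul_cancel₀ _ (ne_of_gt hV)]
end

section
/- Let χ be a Dirichlet character modulo q, let 0 < α ≤ 1, let t be real, and let y ≥ 4. Then ∏_{√y < p ≤ y prime, p ∤ q} | (1 − p^{−α}) / (1 − χ(p)·p^{−α−it}) | ≤ exp( − ∑_{√y < p ≤ y prime, p ∤ q} (1 − Re(χ(p)·p^{−it}))/p^α ). -/
open Complex

private lemma key1 {x : ℝ} (hx : 0 ≤ x) : (1-x) * Real.exp (2*x) ≤ 1+x := by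
  rcases le_or_gt 1 x with h | h
  · nlinarith [Real.exp_pos (2*x)]
  · have hb := Real.exp_bound' hx h.le (n := 4) (by norm_num)
    have hq : Real.exp x ≤ 1 + x + x^2/2 + x^3/6 + x^4*5/96 := by
      refine hb.trans_eq ?_
      simp [Finset.sum_range_succ, Nat.factorial]
      ring
    have hep : (0:ℝ) < Real.exp x := Real.exp_pos x
    have he : Real.exp (2*x) = Real.exp x * Real.exp x := by
      rw [← Real.exp_add]; ring_nf
    set Q : ℝ := 1 + x + x^2/2 + x^3/6 + x^4*5/96 with hQ
    have h1 : Real.exp x * Real.exp x ≤ Q * Q :=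
      mul_le_mul hq hq hep.le (by positivity)
    have h2 : (1-x) * (Real.exp x * Real.exp x) ≤ (1-x) * (Q*Q) :=
      mul_le_mul_of_nonneg_left h1 (by linarith)
    have h3 : (1-x) * (Q*Q) ≤ 1+x := by
      rw [hQ]
      nlinarith [pow_nonneg hx 3, pow_nonneg hx 4, pow_nonneg hx 5, pow_nonneg hx 6,
        pow_nonneg hx 7, pow_nonneg hx 8, pow_nonneg hx 9]
    rw [he]; linarith

private lemma per_factor {x : ℝ} (hx0 : 0 < x) (hx1 : x < 1) {z : ℂ} (hz : ‖z‖ = 1) :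
    ‖(((1 - x : ℝ)) : ℂ) / (1 - z * x)‖ ≤ Real.exp (-((1 - z.re) * x)) := by
  set c : ℝ := z.re with hc
  have hc1 : |c| ≤ 1 := by
    have := Complex.abs_re_le_norm z
    rwa [hz] at this
  have hca : -1 ≤ c := (abs_le.mp hc1).1
  have hcb : c ≤ 1 := (abs_le.mp hc1).2
  have hnx : ‖z * (x:ℂ)‖ = x := by
    rw [norm_mul, hz, Complex.norm_real, one_mul, Real.norm_of_nonneg hx0.le]
  have hden : 1 - x ≤ ‖1 - z * (x:ℂ)‖ := by
    calc 1 - x = ‖(1:ℂ)‖ - ‖z * (x:ℂ)‖ := by rw [hnx, norm_one]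
    _ ≤ ‖1 - z * (x:ℂ)‖ := norm_sub_norm_le _ _
  have hdpos : 0 < ‖1 - z * (x:ℂ)‖ := lt_of_lt_of_le (by linarith) hden
  have hz2 : z.re^2 + z.im^2 = 1 := by
    have h : ‖z‖ ^ 2 = 1 := by rw [hz]; norm_num
    rw [Complex.sq_norm, Complex.normSq_apply] at h
    nlinarith [h]
  have hsq : ‖1 - z * (x:ℂ)‖^2 = 1 - 2*c*x + x^2 := by
    rw [Complex.sq_norm]
    simp only [Complex.normSq_apply, Complex.sub_re, Complex.sub_im, Complex.mul_re,
      Complex.mul_im, Complex.ofReal_re, Complex.ofReal_im, Complex.one_re, Complex.one_im]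
    nlinarith [hz2]
  have hgoal : (1 - x) * Real.exp ((1-c)*x) ≤ ‖1 - z * (x:ℂ)‖ := by
    have hE : Real.exp ((1-c)*x) * Real.exp ((1-c)*x) = Real.exp (2*((1-c)*x)) := by
      rw [← Real.exp_add]; ring_nf
    have hconv : Real.exp (2*((1-c)*x)) ≤ (1-c)/2 * Real.exp (4*x) + (1+c)/2 := by
      have h := convexOn_exp.2 (Set.mem_univ (4*x)) (Set.mem_univ (0:ℝ))
        (by linarith : (0:ℝ) ≤ (1-c)/2) (by linarith : (0:ℝ) ≤ (1+c)/2) (by ring)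
      simp only [smul_eq_mul, Real.exp_zero, mul_zero, add_zero, mul_one] at h
      rw [show 2*((1-c)*x) = (1-c)/2*(4*x) by ring]; exact h
    have hk : (1-x) * Real.exp (2*x) ≤ 1+x := key1 hx0.le
    have hnn : 0 ≤ (1-x) * Real.exp (2*x) := by
      have := Real.exp_pos (2*x); nlinarith
    have hk2 : (1-x)^2 * Real.exp (4*x) ≤ (1+x)^2 := by
      have h4 : Real.exp (4*x) = Real.exp (2*x) * Real.exp (2*x) := by
        rw [← Real.exp_add]; ring_nf
      rw [h4]
      nlinarith [mul_self_le_mul_self hnn hk]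
    have hsq2 : ((1 - x) * Real.exp ((1-c)*x))^2 ≤ ‖1 - z * (x:ℂ)‖^2 := by
      rw [hsq]
      have expand : ((1 - x) * Real.exp ((1-c)*x))^2
          = (1-x)^2 * (Real.exp ((1-c)*x) * Real.exp ((1-c)*x)) := by ring
      rw [expand, hE]
      have h5 := mul_le_mul_of_nonneg_left hconv (sq_nonneg (1-x))
      have h6 := mul_le_mul_of_nonneg_left hk2 (by linarith : (0:ℝ) ≤ (1-c)/2)
      nlinarith [h5, h6]
    have h1 : 0 ≤ (1 - x) * Real.exp ((1-c)*x) := by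
      have := Real.exp_pos ((1-c)*x); nlinarith
    exact (pow_le_pow_iff_left₀ h1 (norm_nonneg _) two_ne_zero).mp hsq2
  rw [norm_div, Complex.norm_real, Real.norm_of_nonneg (by linarith : (0:ℝ) ≤ 1 - x),
    div_le_iff₀ hdpos, Real.exp_neg]
  rw [inv_mul_eq_div, le_div_iff₀ (Real.exp_pos _)] at *
  · exact hgoal

/-- For a Dirichlet character `χ (mod q)`, `0 < α ≤ 1`, `t` real and `y ≥ 4`:
`∏_{√y < p ≤ y, p ∤ q} |(1 - p^{-α})/(1 - χ(p)p^{-α-it})|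
  ≤ exp(-∑_{√y < p ≤ y, p ∤ q} (1 - Re(χ(p)p^{-it}))/p^α)`. -/
theorem euler_product_ratio_bound
    {q : ℕ} (χ : DirichletCharacter ℂ q) (α t y : ℝ)
    (hα0 : 0 < α) (hα1 : α ≤ 1) (hy : 4 ≤ y) :
    (∏ p ∈ (primesUpTo y).filter (fun (p : ℕ) => Real.sqrt y < (p : ℝ) ∧ ¬ p ∣ q),
        ‖(((1 - (p : ℝ) ^ (-α) : ℝ)) : ℂ) /
          (1 - χ (p : ZMod q) * (p : ℂ) ^ (-((α : ℂ) + (t : ℂ) * Complex.I)))‖) ≤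
      Real.exp
        (-∑ p ∈ (primesUpTo y).filter (fun (p : ℕ) => Real.sqrt y < (p : ℝ) ∧ ¬ p ∣ q),
          (1 - (χ (p : ZMod q) * (p : ℂ) ^ (-((t : ℂ) * Complex.I))).re) / (p : ℝ) ^ α) := by
  set S := (primesUpTo y).filter (fun (p : ℕ) => Real.sqrt y < (p : ℝ) ∧ ¬ p ∣ q) with hS
  rw [← Finset.sum_neg_distrib, Real.exp_sum]
  refine Finset.prod_le_prod (fun p _ => norm_nonneg _) (fun p hp => ?_)
  obtain ⟨hp1, hp2, hp3⟩ : p.Prime ∧ Real.sqrt y < (p:ℝ) ∧ ¬ p ∣ q := by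
    simp only [hS, primesUpTo, Finset.mem_filter, Finset.mem_Iic] at hp
    exact ⟨hp.1.2, hp.2.1, hp.2.2⟩
  have hp0 : (0:ℝ) < p := by exact_mod_cast hp1.pos
  have hp1' : (1:ℝ) < p := by exact_mod_cast hp1.one_lt
  set x : ℝ := (p:ℝ) ^ (-α) with hx
  have hx0 : 0 < x := Real.rpow_pos_of_pos hp0 _
  have hx1 : x < 1 := Real.rpow_lt_one_of_one_lt_of_neg hp1' (by linarith)
  set z : ℂ := χ (p : ZMod q) * (p : ℂ) ^ (-((t : ℂ) * Complex.I)) with hz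
  have hnc : ‖χ (p : ZMod q)‖ = 1 := by
    have hu : IsUnit ((p : ZMod q)) := (ZMod.isUnit_prime_iff_not_dvd hp1).mpr hp3
    have := DirichletCharacter.unit_norm_eq_one χ hu.unit
    rwa [hu.unit_spec] at this
  have hnw : ‖(p : ℂ) ^ (-((t : ℂ) * Complex.I))‖ = 1 := by
    rw [show ((p:ℕ):ℂ) = ((p:ℝ):ℂ) by push_cast; ring,
      Complex.norm_cpow_eq_rpow_re_of_pos hp0]
    simp
  have hznorm : ‖z‖ = 1 := by rw [hz, norm_mul, hnc, hnw, one_mul]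
  have hfac : (1 : ℂ) - χ (p : ZMod q) * (p : ℂ) ^ (-((α : ℂ) + (t : ℂ) * Complex.I))
      = 1 - z * (x : ℂ) := by
    have hne : (p : ℂ) ≠ 0 := by exact_mod_cast hp1.pos.ne'
    have hsplit : (p : ℂ) ^ (-((α : ℂ) + (t : ℂ) * Complex.I))
        = (p : ℂ) ^ (-(α:ℂ)) * (p : ℂ) ^ (-((t : ℂ) * Complex.I)) := by
      rw [← Complex.cpow_add _ _ hne]; ring_nf
    have hreal : ((x : ℝ) : ℂ) = (p : ℂ) ^ (-(α:ℂ)) := by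
      rw [hx, Complex.ofReal_cpow hp0.le]
      push_cast
      ring_nf
    rw [hsplit, hz, hreal]; ring
  rw [hfac]
  have := per_factor hx0 hx1 hznorm
  refine this.trans (le_of_eq ?_)
  congr 1
  rw [hz, hx, Real.rpow_neg hp0.le]
  ring
end

section
/- For every c > 0 there exists a constant C = C(c) such that for every prime p₀, every real θ, every x with log log x ≥ 3, and every ε ≥ (log log x)^{−1/15}: ∫_{|t| ≥ ε} (log x)^{ −c·(1 − cos(θ − t·log p₀)) } · dt/( |t|·(1+|t|)^8 ) ≤ (C/ε) · ( (log log x)^{−2/5} + exp( −(log log x)^{1/5}/C ) ). -/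
open MeasureTheory Real

set_option maxHeartbeats 2000000 in
/-- Bound for an oscillating exponential integral over `|t| ≥ ε`:
`∫_{|t| ≥ ε} (log x)^{-c(1 - cos(θ - t log p₀))} dt/(|t|(1+|t|)^8)
  ≪ (1/ε)((log log x)^{-2/5} + e^{-Θ((log log x)^{1/5})})`. -/
theorem oscillating_exponential_integral_bound :
    ∀ c : ℝ, 0 < c → ∃ C : ℝ, 0 < C ∧
      ∀ (p₀ : ℕ), p₀.Prime → ∀ θ x ε : ℝ,
        3 ≤ Real.log (Real.log x) →
        Real.log (Real.log x) ^ (-(1 : ℝ) / 15) ≤ ε →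
        (∫ t in {t : ℝ | ε ≤ |t|},
            Real.exp (-(c * (1 - Real.cos (θ - t * Real.log p₀)) *
              Real.log (Real.log x))) / (|t| * (1 + |t|) ^ 8)) ≤
          (C / ε) * (Real.log (Real.log x) ^ (-(2 : ℝ) / 5) +
            Real.exp (-(Real.log (Real.log x) ^ ((1 : ℝ) / 5)) / C)) := by
  intro c hc
  refine ⟨π * (46656 * (π ^ 2 / (2 * c)) ^ 6) + 10, by positivity, ?_⟩
  set C : ℝ := π * (46656 * (π ^ 2 / (2 * c)) ^ 6) + 10 with hCdef
  clear_value C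
  have hC0 : 0 < C := by rw [hCdef]; positivity
  intro p₀ hp θ x ε h3 hεlb
  set L := Real.log (Real.log x) with hLdef
  have hL0 : (0:ℝ) < L := by linarith
  have hL1 : (1:ℝ) ≤ L := by linarith
  set lam := Real.log (p₀ : ℝ) with hlamdef
  have hlam : (0.6931471803 : ℝ) < lam := by
    calc (0.6931471803:ℝ) < Real.log 2 := Real.log_two_gt_d9
    _ ≤ lam := Real.log_le_log two_pos (by exact_mod_cast hp.two_le)
  have hlam0 : (0:ℝ) < lam := by linarith
  clear_value L lam
  set T := L ^ ((1:ℝ)/15) with hTdef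
  set w := L ^ (-(7:ℝ)/15) with hwdef
  have hT1 : (1:ℝ) ≤ T := Real.one_le_rpow hL1 (by norm_num)
  have hT0 : (0:ℝ) < T := lt_of_lt_of_le one_pos hT1
  have hw0 : (0:ℝ) < w := Real.rpow_pos_of_pos hL0 _
  have hw1 : w ≤ 1 := Real.rpow_le_one_of_one_le_of_nonpos hL1 (by norm_num)
  have hε0 : (0:ℝ) < ε := lt_of_lt_of_le (Real.rpow_pos_of_pos hL0 _) hεlb
  clear_value T w
  have hTw : T * w = L ^ (-(2:ℝ)/5) := by
    rw [hTdef, hwdef, ← Real.rpow_add hL0]; norm_num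
  have hM0 : (0:ℝ) < L ^ (-(2:ℝ)/5) := Real.rpow_pos_of_pos hL0 _
  have hT6 : T ^ (6:ℕ) = L ^ ((2:ℝ)/5) := by
    rw [hTdef, ← Real.rpow_natCast (L ^ ((1:ℝ)/15)) 6, ← Real.rpow_mul hL0.le]; norm_num
  have hwL : w ^ (2:ℕ) * L = L ^ ((1:ℝ)/15) := by
    rw [hwdef, ← Real.rpow_natCast (L ^ (-(7:ℝ)/15)) 2, ← Real.rpow_mul hL0.le]
    nth_rewrite 2 [← Real.rpow_one L]
    rw [← Real.rpow_add hL0]; norm_num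
  -- the union of bad intervals
  set k0 : ℤ := ⌈(θ - lam*T - w)/(2*π)⌉ with hk0
  set k1 : ℤ := ⌊(θ + lam*T + w)/(2*π)⌋ with hk1
  set D : Set ℝ := ⋃ k ∈ Finset.Icc k0 k1,
      Set.Icc ((θ - 2*π*k - w)/lam) ((θ - 2*π*k + w)/lam) with hDdef
  clear_value k0 k1 D
  have hDm : MeasurableSet D := by
    rw [hDdef]
    exact (Finset.Icc k0 k1).measurableSet_biUnion fun k _ => measurableSet_Icc
  have hIcc : ∀ k : ℤ, volume (Set.Icc ((θ - 2*π*k - w)/lam) ((θ - 2*π*k + w)/lam))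
      = ENNReal.ofReal (2*w/lam) := by
    intro k
    rw [Real.volume_Icc]
    congr 1
    field_simp
    ring
  have hDvol : volume D ≤ ((Finset.Icc k0 k1).card : ENNReal) * ENNReal.ofReal (2*w/lam) := by
    rw [hDdef]
    refine le_trans (measure_biUnion_finset_le _ _) ?_
    rw [Finset.sum_congr rfl fun k _ => hIcc k, Finset.sum_const, nsmul_eq_mul]
  have hDfin : volume D < ⊤ :=
    lt_of_le_of_lt hDvol (ENNReal.mul_lt_top (ENNReal.natCast_lt_top _) ENNReal.ofReal_lt_top)
  have hcard : ((Finset.Icc k0 k1).card : ℝ) ≤ (lam*T + w)/π + 1 := by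
    rw [Int.card_Icc]
    have hmax : (((k1 + 1 - k0).toNat : ℤ) : ℝ) = max ((k1:ℝ) + 1 - k0) 0 := by
      rw [Int.toNat_eq_max]
      push_cast
      ring_nf
    rw [show (((k1 + 1 - k0).toNat : ℕ) : ℝ) = (((k1 + 1 - k0).toNat : ℤ) : ℝ) by push_cast; ring,
      hmax]
    have h1 : (k1:ℝ) ≤ (θ + lam*T + w)/(2*π) := by rw [hk1]; exact Int.floor_le _
    have h2 : (θ - lam*T - w)/(2*π) ≤ (k0:ℝ) := by rw [hk0]; exact Int.le_ceil _
    have heq : (θ + lam*T + w)/(2*π) - (θ - lam*T - w)/(2*π) = (lam*T+w)/π := by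
      field_simp
      ring
    refine max_le (by linarith) (by positivity)
  have hDreal : (volume D).toReal ≤ 6 * (T*w) := by
    have h1 : (volume D).toReal ≤ ((Finset.Icc k0 k1).card : ℝ) * (2*w/lam) := by
      have h2 := ENNReal.toReal_mono
        (by finiteness) hDvol
      rwa [ENNReal.toReal_mul, ENNReal.toReal_natCast,
        ENNReal.toReal_ofReal (by positivity)] at h2
    have h3 : ((Finset.Icc k0 k1).card : ℝ) * (2*w/lam) ≤ ((lam*T + w)/π + 1) * (2*w/lam) := by
      apply mul_le_mul_of_nonneg_right hcard (by positivity)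
    have hπ3 : (3:ℝ) < π := Real.pi_gt_three
    have hπ15 : π ≤ 3.15 := Real.pi_lt_d2.le
    have h4 : ((lam*T + w)/π + 1) * (2*w/lam) ≤ 6 * (T*w) := by
      rw [div_add' _ _ _ (by positivity), div_mul_div_comm, div_le_iff₀ (by positivity)]
      have key4 : 2*lam + 2 + 2*π ≤ 6*π*lam := by nlinarith
      have e1 : w*w ≤ T*w := mul_le_mul_of_nonneg_right (hw1.trans hT1) hw0.le
      have e2 : w ≤ T*w := le_mul_of_one_le_left hw0.le hT1
      have e3 := mul_le_mul_of_nonneg_right key4 (mul_pos hT0 hw0).le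
      nlinarith [e1, e2, e3]
    linarith
  -- key pointwise estimate away from D
  have key : ∀ t : ℝ, |t| ≤ T → t ∉ D →
      2*c/π^2 * L^((1:ℝ)/15) ≤ c * (1 - Real.cos (θ - t*lam)) * L := by
    intro t ht htD
    set φ := θ - t*lam with hφ
    set k : ℤ := round (φ/(2*π)) with hk
    clear_value φ k
    have h2π : (0:ℝ) < 2*π := by positivity
    have hround : |φ - 2*π*k| ≤ π := by
      have h0 : |φ/(2*π) - (k:ℝ)| ≤ 1/2 := by rw [hk]; exact abs_sub_round (φ/(2*π))
      calc |φ - 2*π*k| = |φ/(2*π) - (k:ℝ)| * (2*π) := by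
            have heq : (φ/(2*π) - (k:ℝ))*(2*π) = φ - 2*π*k := by
              field_simp
            rw [← heq, abs_mul, abs_of_pos h2π]
        _ ≤ (1/2) * (2*π) := mul_le_mul_of_nonneg_right h0 h2π.le
        _ = π := by ring
    have hw_lt : w < |φ - 2*π*k| := by
      by_contra hcon
      push_neg at hcon
      apply htD
      rw [abs_le] at hcon
      have hmem : t ∈ Set.Icc ((θ - 2*π*k - w)/lam) ((θ - 2*π*k + w)/lam) := by
        constructor
        · rw [div_le_iff₀ hlam0]
          have := hcon.2
          rw [hφ] at this
          linarith
        · rw [le_div_iff₀ hlam0]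
          have := hcon.1
          rw [hφ] at this
          linarith
      have htT : -T ≤ t ∧ t ≤ T := abs_le.mp ht
      have hφub : φ ≤ θ + lam*T := by
        have h1 : (-t)*lam ≤ T*lam := mul_le_mul_of_nonneg_right (by linarith [htT.1]) hlam0.le
        rw [hφ]
        linarith
      have hφlb : θ - lam*T ≤ φ := by
        have h1 : t*lam ≤ T*lam := mul_le_mul_of_nonneg_right htT.2 hlam0.le
        rw [hφ]
        linarith
      have hkmem : k ∈ Finset.Icc k0 k1 := by
        rw [Finset.mem_Icc]
        constructor
        · rw [hk0]
          apply Int.ceil_le.mpr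
          rw [div_le_iff₀ h2π]
          linarith [hcon.2, hφlb]
        · rw [hk1]
          apply Int.le_floor.mpr
          rw [le_div_iff₀ h2π]
          linarith [hcon.1, hφub]
      rw [hDdef]
      exact Set.mem_iUnion₂.mpr ⟨k, hkmem, hmem⟩
    have hcosper : Real.cos φ = Real.cos (φ - 2*π*k) := by
      rw [show φ - 2*π*k = φ - k * (2*π) by ring, Real.cos_sub_int_mul_two_pi]
    have hcosb : Real.cos (φ - 2*π*k) ≤ 1 - 2/π^2 * (φ - 2*π*k)^2 :=
      Real.cos_le_one_sub_mul_cos_sq hround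
    have hsq : w^2 ≤ (φ - 2*π*k)^2 := by
      have := pow_le_pow_left₀ hw0.le hw_lt.le 2
      rwa [sq_abs] at this
    have hcosφ : 2/π^2 * w^2 ≤ 1 - Real.cos φ := by
      rw [hcosper]
      have hπ0 : (0:ℝ) < π^2 := by positivity
      have h5 : 2/π^2 * w^2 ≤ 2/π^2 * (φ - 2*π*k)^2 :=
        mul_le_mul_of_nonneg_left hsq (by positivity)
      linarith
    calc 2*c/π^2 * L^((1:ℝ)/15) = c * (2/π^2 * w^2) * L := by
          rw [← hwL]; ring
      _ ≤ c * (1 - Real.cos φ) * L := by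
          apply mul_le_mul_of_nonneg_right _ hL0.le
          exact mul_le_mul_of_nonneg_left hcosφ hc.le
  -- the majorant
  set E := Real.exp (-(2*c/π^2 * L^((1:ℝ)/15))) with hEdef
  have hE0 : (0:ℝ) < E := Real.exp_pos _
  set M := E + L^(-(2:ℝ)/5) with hMdef
  have hMpos : (0:ℝ) < M := by positivity
  set G : ℝ → ℝ := fun t => (M * (1+t^2)⁻¹ + Set.indicator D (fun _ => (1:ℝ)) t) / ε
    with hGdef
  have hGint1 : Integrable (fun t:ℝ => M * (1+t^2)⁻¹) := integrable_inv_one_add_sq.const_mul M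
  have hGint2 : Integrable (Set.indicator D (fun _ => (1:ℝ))) := by
    rw [integrable_indicator_iff hDm]
    exact integrableOn_const hDfin.ne
  have hGint : Integrable G := ((hGint1.add hGint2).div_const ε)
  have hGnn : ∀ t, 0 ≤ G t := by
    intro t
    apply div_nonneg _ hε0.le
    apply add_nonneg (by positivity)
    exact Set.indicator_nonneg (fun _ _ => zero_le_one) t
  have hGval : ∫ t, G t = (M * π + (volume D).toReal) / ε := by
    rw [hGdef]
    rw [integral_div, integral_add hGint1 hGint2, integral_const_mul,
      integral_univ_inv_one_add_sq]
    congr 2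
    exact integral_indicator_one hDm
  have hS : MeasurableSet {t:ℝ | ε ≤ |t|} :=
    measurableSet_le measurable_const (_root_.continuous_abs.measurable)
  -- pointwise bound on the domain
  have hpt : ∀ t ∈ {t:ℝ | ε ≤ |t|},
      Real.exp (-(c * (1 - Real.cos (θ - t * lam)) * L)) / (|t| * (1 + |t|) ^ 8) ≤ G t := by
    intro t ht
    simp only [Set.mem_setOf_eq] at ht
    have habs : (0:ℝ) < |t| := lt_of_lt_of_le hε0 ht
    have h1t : (1:ℝ) ≤ 1 + |t| := by linarith [abs_nonneg t]
    have hP1 : (1:ℝ) ≤ (1+|t|)^8 := one_le_pow₀ h1t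
    have hPt : (1:ℝ) + t^2 ≤ (1+|t|)^2 := by nlinarith [abs_nonneg t, sq_abs t]
    have hexp1 : Real.exp (-(c * (1 - Real.cos (θ - t*lam)) * L)) ≤ 1 := by
      rw [Real.exp_le_one_iff]
      have h0 : (0:ℝ) ≤ 1 - Real.cos (θ - t*lam) := by
        nlinarith [Real.cos_le_one (θ - t*lam)]
      nlinarith [mul_nonneg (mul_nonneg hc.le h0) hL0.le]
    have ht2 : (0:ℝ) < 1 + t^2 := by positivity
    by_cases htD : t ∈ D
    · have h1 : Real.exp (-(c * (1 - Real.cos (θ - t*lam)) * L)) / (|t| * (1 + |t|) ^ 8)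
          ≤ 1/ε := by
        apply div_le_div₀ zero_le_one hexp1 hε0
        calc ε ≤ |t| := ht
          _ ≤ |t| * (1+|t|)^8 := le_mul_of_one_le_right habs.le hP1
      refine h1.trans ?_
      rw [hGdef]
      simp only [Set.indicator_of_mem htD]
      exact (div_le_div_iff_of_pos_right hε0).mpr (le_add_of_nonneg_left (by positivity))
    · have hzero : Set.indicator D (fun _ => (1:ℝ)) t = 0 := Set.indicator_of_notMem htD _
      have hGt : G t = M * (1+t^2)⁻¹ / ε := by rw [hGdef]; simp [hzero]
      rw [hGt]
      by_cases hT : |t| ≤ T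
      · have hEb := key t hT htD
        have hexpE : Real.exp (-(c*(1-Real.cos (θ - t*lam))*L)) ≤ E := by
          rw [hEdef]
          exact Real.exp_le_exp.mpr (by linarith)
        calc Real.exp (-(c * (1 - Real.cos (θ - t*lam)) * L)) / (|t| * (1 + |t|) ^ 8)
            ≤ E / (ε * (1+t^2)) := by
              apply div_le_div₀ hE0.le hexpE (by positivity)
              calc ε * (1+t^2) ≤ |t| * (1+|t|)^2 :=
                    mul_le_mul ht hPt ht2.le habs.le
                _ ≤ |t| * (1+|t|)^8 := by
                    apply mul_le_mul_of_nonneg_left _ habs.le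
                    exact pow_le_pow_right₀ h1t (by norm_num)
          _ ≤ M / (ε * (1+t^2)) :=
              (div_le_div_iff_of_pos_right (by positivity)).mpr (le_add_of_nonneg_right hM0.le)
          _ = M * (1+t^2)⁻¹ / ε := by
              rw [div_eq_mul_inv, mul_inv, div_eq_mul_inv]
              ring
      · push_neg at hT
        have hden : ε * (L^((2:ℝ)/5) * (1+t^2)) ≤ |t| * (1+|t|)^8 := by
          have h6 : T^(6:ℕ) ≤ (1+|t|)^6 := by
            apply pow_le_pow_left₀ hT0.le
            linarith
          have h8 : L^((2:ℝ)/5) * (1+t^2) ≤ (1+|t|)^8 := by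
            calc L^((2:ℝ)/5) * (1+t^2) ≤ (1+|t|)^6 * (1+|t|)^2 := by
                  rw [← hT6]
                  exact mul_le_mul h6 hPt ht2.le (by positivity)
              _ = (1+|t|)^8 := by ring
          calc ε * (L^((2:ℝ)/5) * (1+t^2)) ≤ |t| * (L^((2:ℝ)/5) * (1+t^2)) :=
                mul_le_mul_of_nonneg_right ht (by positivity)
            _ ≤ |t| * (1+|t|)^8 := mul_le_mul_of_nonneg_left h8 habs.le
        have hinv : L^(-(2:ℝ)/5) = (L^((2:ℝ)/5))⁻¹ := by
          rw [← Real.rpow_neg hL0.le]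
          norm_num
        have hLpos : (0:ℝ) < L^((2:ℝ)/5) := Real.rpow_pos_of_pos hL0 _
        calc Real.exp (-(c * (1 - Real.cos (θ - t*lam)) * L)) / (|t| * (1 + |t|) ^ 8)
            ≤ 1 / (ε * (L^((2:ℝ)/5) * (1+t^2))) :=
              div_le_div₀ zero_le_one hexp1 (by positivity) hden
          _ = L^(-(2:ℝ)/5) * (1+t^2)⁻¹ / ε := by
              rw [hinv]
              rw [one_div, mul_inv, mul_inv, div_eq_mul_inv]
              ring
          _ ≤ M * (1+t^2)⁻¹ / ε :=
              (div_le_div_iff_of_pos_right hε0).mpr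
                (mul_le_mul_of_nonneg_right (le_add_of_nonneg_left hE0.le) (by positivity))
  -- putting it together
  have hmono1 : (∫ t in {t:ℝ | ε ≤ |t|},
      Real.exp (-(c * (1 - Real.cos (θ - t * lam)) * L)) / (|t| * (1 + |t|) ^ 8))
      ≤ ∫ t in {t:ℝ | ε ≤ |t|}, G t := by
    apply integral_mono_of_nonneg
    · exact Filter.Eventually.of_forall fun t => by positivity
    · exact hGint.restrict
    · exact (ae_restrict_iff' hS).2 (Filter.Eventually.of_forall hpt)
  have hmono2 : (∫ t in {t:ℝ | ε ≤ |t|}, G t) ≤ ∫ t, G t :=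
    setIntegral_le_integral hGint (Filter.Eventually.of_forall hGnn)
  -- the exponential bound
  have hEbound : E ≤ 46656 * (π^2/(2*c))^6 * L^(-(2:ℝ)/5) := by
    set u := 2*c/π^2 * L^((1:ℝ)/15) with hu
    have hu0 : (0:ℝ) < u := by positivity
    have h6 : (u/6)^6 ≤ Real.exp u := by
      have h1 : u/6 ≤ Real.exp (u/6) := by
        have := Real.add_one_le_exp (u/6)
        linarith
      calc (u/6)^6 ≤ (Real.exp (u/6))^6 := pow_le_pow_left₀ (by positivity) h1 6
        _ = Real.exp u := by
            rw [← Real.exp_nat_mul]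
            congr 1
            push_cast
            ring
    have h2 : u^6 / 46656 ≤ Real.exp u := by
      rw [show u^6/46656 = (u/6)^6 by rw [div_pow]; norm_num]
      exact h6
    have hE' : E ≤ 46656/u^6 := by
      rw [hEdef, Real.exp_neg]
      have h3 := one_div_le_one_div_of_le (by positivity : (0:ℝ) < u^6/46656) h2
      rw [one_div_div] at h3
      calc (Real.exp u)⁻¹ = 1 / Real.exp u := (one_div _).symm
        _ ≤ 46656/u^6 := h3
    have hu6 : u^6 = (2*c/π^2)^6 * L^((2:ℝ)/5) := by
      rw [hu, mul_pow, ← Real.rpow_natCast (L^((1:ℝ)/15)) 6, ← Real.rpow_mul hL0.le]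
      norm_num
    have hinv : L^(-(2:ℝ)/5) = (L^((2:ℝ)/5))⁻¹ := by
      rw [← Real.rpow_neg hL0.le]
      norm_num
    calc E ≤ 46656/u^6 := hE'
      _ = 46656 * (π^2/(2*c))^6 * L^(-(2:ℝ)/5) := by
          rw [hu6, hinv]
          have hπ0 : (π:ℝ) ≠ 0 := Real.pi_ne_zero
          have hc0 : c ≠ 0 := hc.ne'
          have hL25 : L^((2:ℝ)/5) ≠ 0 := (Real.rpow_pos_of_pos hL0 _).ne'
          field_simp
  have hfinal : M * π + (volume D).toReal ≤ C * L^(-(2:ℝ)/5) := by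
    have hπ4 : (π:ℝ) ≤ 4 := by linarith [Real.pi_lt_four]
    have hπ3 : (3:ℝ) < π := Real.pi_gt_three
    have hD6 : (volume D).toReal ≤ 6 * L^(-(2:ℝ)/5) := by rw [← hTw]; exact hDreal
    have hMπ : M * π ≤ (π * (46656 * (π^2/(2*c))^6) + 4) * L^(-(2:ℝ)/5) := by
      rw [hMdef, add_mul]
      have h1 : E * π ≤ π * (46656 * (π^2/(2*c))^6) * L^(-(2:ℝ)/5) := by
        calc E * π ≤ (46656 * (π^2/(2*c))^6 * L^(-(2:ℝ)/5)) * π :=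
              mul_le_mul_of_nonneg_right hEbound (by positivity)
          _ = π * (46656 * (π^2/(2*c))^6) * L^(-(2:ℝ)/5) := by ring
      have h2 : L^(-(2:ℝ)/5) * π ≤ 4 * L^(-(2:ℝ)/5) := by
        calc L^(-(2:ℝ)/5) * π ≤ L^(-(2:ℝ)/5) * 4 := mul_le_mul_of_nonneg_left hπ4 hM0.le
          _ = 4 * L^(-(2:ℝ)/5) := by ring
      calc E * π + L^(-(2:ℝ)/5) * π
          ≤ π * (46656 * (π^2/(2*c))^6) * L^(-(2:ℝ)/5) + 4 * L^(-(2:ℝ)/5) := by linarith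
        _ = (π * (46656 * (π^2/(2*c))^6) + 4) * L^(-(2:ℝ)/5) := by ring
    rw [hCdef]
    nlinarith [hM0]
  calc (∫ t in {t:ℝ | ε ≤ |t|},
      Real.exp (-(c * (1 - Real.cos (θ - t * lam)) * L)) / (|t| * (1 + |t|) ^ 8))
      ≤ ∫ t, G t := hmono1.trans hmono2
    _ = (M * π + (volume D).toReal) / ε := hGval
    _ ≤ (C * L^(-(2:ℝ)/5)) / ε := (div_le_div_iff_of_pos_right hε0).mpr hfinal
    _ = (C/ε) * L^(-(2:ℝ)/5) := by ring
    _ ≤ (C/ε) * (L^(-(2:ℝ)/5) + Real.exp (-(L^((1:ℝ)/5))/C)) := by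
        apply mul_le_mul_of_nonneg_left _ (by positivity)
        exact le_add_of_nonneg_right (Real.exp_pos _).le
end
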